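/- arXiv:1705.10391 — 7 statements merged into one kernel-verified Lean document; each statement's English description precedes it below -/
import Mathlib

section
/- Suppose H is a graph, n_0 ∈ ℕ, β_H > 0 and 0 < c_H < 1 are such that for all n ≥ n_0, every H-free graph on n vertices has at most β_H · n^{1+c_H} edges. Let G be an H-free graph with minimum degree δ ≥ 2n_0. Then Z(G) ≥ 2^{-1-2/c_H} · (δ/β_H)^{1/c_H}. -/
namespace ZeroForcing

variable {V : Type*}

/-- The set of vertices which eventually become black in the zero forcing process on `G`
starting from the initially black set `S`. -/
inductive Forced (G : SimpleGraph V) (S : Set V) : V → Prop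
  | init (v : V) (hv : v ∈ S) : Forced G S v
  | force (u w : V) (hu : Forced G S u) (hadj : G.Adj u w)
      (hothers : ∀ x, G.Adj u x → x ≠ w → Forced G S x) : Forced G S w

/-- `S` is a zero forcing set of `G` if iterating the forcing rule makes every vertex black. -/
def IsZeroForcingSet (G : SimpleGraph V) (S : Set V) : Prop := ∀ v, Forced G S v

/-- The zero forcing number of `G`: the minimum cardinality of a zero forcing set. -/
noncomputable def zeroForcingNumber (G : SimpleGraph V) [Fintype V] : ℕ :=
  sInf {k | ∃ S : Finset V, S.card = k ∧ IsZeroForcingSet G ↑S}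

/-- `G` contains a subgraph isomorphic to `H`. -/
def ContainsSubgraphCopy {W V : Type*} (H : SimpleGraph W) (G : SimpleGraph V) : Prop :=
  ∃ f : W ↪ V, ∀ a b : W, H.Adj a b → G.Adj (f a) (f b)

/-- One legal force step on finsets of black vertices. -/
def Step [DecidableEq V] (G : SimpleGraph V) (B B' : Finset V) : Prop :=
  ∃ u w, u ∈ B ∧ w ∉ B ∧ G.Adj u w ∧ (∀ x, G.Adj u x → x = w ∨ x ∈ B) ∧ B' = insert w B

theorem Step.subset [DecidableEq V] {G : SimpleGraph V} {B B' : Finset V} (h : Step G B B') :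
    B ⊆ B' := by
  obtain ⟨u, w, -, -, -, -, rfl⟩ := h
  exact Finset.subset_insert _ _

theorem Step.card [DecidableEq V] {G : SimpleGraph V} {B B' : Finset V} (h : Step G B B') :
    B'.card = B.card + 1 := by
  obtain ⟨u, w, -, hw, -, -, rfl⟩ := h
  exact Finset.card_insert_of_notMem hw

theorem reach_subset [DecidableEq V] {G : SimpleGraph V} {S B : Finset V}
    (h : Relation.ReflTransGen (Step G) S B) : S ⊆ B := by
  induction h with
  | refl => exact subset_rfl
  | tail _ hstep ih => exact ih.trans hstep.subset

/-- If `S` is a zero forcing set, then `univ` is reachable from `S` by legal force steps. -/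
theorem reach_univ [Fintype V] [DecidableEq V] {G : SimpleGraph V} {S : Finset V}
    (hS : IsZeroForcingSet G ↑S) : Relation.ReflTransGen (Step G) S Finset.univ := by
  classical
  obtain ⟨B, hB, hmax⟩ := Finset.exists_max_image
    (Finset.univ.filter fun B => Relation.ReflTransGen (Step G) S B) Finset.card
    ⟨S, by simp [Relation.ReflTransGen.refl]⟩
  simp only [Finset.mem_filter, Finset.mem_univ, true_and] at hB
  replace hmax : ∀ B', Relation.ReflTransGen (Step G) S B' → B'.card ≤ B.card := by
    intro B' h
    exact hmax B' (by simp [h])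
  suffices h : B = Finset.univ by rwa [h] at hB
  apply Finset.eq_univ_of_forall
  intro v
  have hv : Forced G ↑S v := hS v
  induction hv with
  | init v hv => exact reach_subset hB hv
  | force u w hu hadj hothers ihu ihx =>
    by_contra hw
    have hstep : Step G B (insert w B) :=
      ⟨u, w, ihu, hw, hadj, fun x hx => by
        by_cases hxw : x = w
        · exact Or.inl hxw
        · exact Or.inr (ihx x hx hxw), rfl⟩
    have := hmax _ (hB.tail hstep)
    rw [hstep.card] at this
    omega

/-- Discrete intermediate value: any size between is achieved along a reach chain. -/
theorem reach_card [DecidableEq V] {G : SimpleGraph V} {A C : Finset V}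
    (h : Relation.ReflTransGen (Step G) A C) :
    ∀ m, A.card ≤ m → m ≤ C.card → ∃ B, Relation.ReflTransGen (Step G) A B ∧ B.card = m := by
  induction h using Relation.ReflTransGen.head_induction_on with
  | refl => intro m h1 h2; exact ⟨C, Relation.ReflTransGen.refl, le_antisymm h2 h1 ▸ rfl⟩
  | head hstep _ ih =>
    intro m h1 h2
    rcases eq_or_lt_of_le h1 with heq | hlt
    · exact ⟨_, Relation.ReflTransGen.refl, heq⟩
    · rename_i a c _ _
      obtain ⟨B, hB, hBm⟩ := ih m (by rw [hstep.card]; omega) h2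
      exact ⟨B, hB.head hstep, hBm⟩

/-- Along a reach chain from `S` to `B` there are `|B| - |S|` distinct vertices all
of whose neighbours lie in `B`. -/
theorem reach_forcers [DecidableEq V] {G : SimpleGraph V} {S B : Finset V}
    (h : Relation.ReflTransGen (Step G) S B) :
    ∃ F : Finset V, F ⊆ B ∧ S.card + F.card = B.card ∧
      ∀ u ∈ F, ∀ x, G.Adj u x → x ∈ B := by
  induction h with
  | refl => exact ⟨∅, by simp⟩
  | tail hreach hstep ih =>
    obtain ⟨F, hFsub, hFcard, hF⟩ := ih
    obtain ⟨u, w, huB, hwB, hadj, hothers, rfl⟩ := hstep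
    refine ⟨insert u F, ?_, ?_, ?_⟩
    · exact Finset.insert_subset (Finset.mem_insert_of_mem huB)
        (hFsub.trans (Finset.subset_insert _ _))
    · have huF : u ∉ F := fun huF => hwB (hF u huF w hadj)
      rw [Finset.card_insert_of_notMem huF, Finset.card_insert_of_notMem hwB]
      omega
    · intro u' hu' x hx
      rcases Finset.mem_insert.mp hu' with rfl | hu'
      · rcases hothers x hx with rfl | hxB
        · exact Finset.mem_insert_self _ _
        · exact Finset.mem_insert_of_mem hxB
      · exact Finset.mem_insert_of_mem (hF u' hu' x hx)

/-- minDegree ≤ |S| for a set reaching univ. -/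
theorem minDegree_le_card [Fintype V] [DecidableEq V] [Nonempty V] {G : SimpleGraph V}
    [DecidableRel G.Adj] {S : Finset V}
    (h : Relation.ReflTransGen (Step G) S Finset.univ) : G.minDegree ≤ S.card := by
  rcases h.cases_head with heq | ⟨B₁, hstep, -⟩
  · obtain ⟨v⟩ := ‹Nonempty V›
    have h1 : G.minDegree ≤ G.degree v := G.minDegree_le_degree v
    have h2 : G.degree v < Fintype.card V := G.degree_lt_card_verts v
    rw [heq, Finset.card_univ]
    omega
  · obtain ⟨u, w, huS, hwS, hadj, hothers, -⟩ := hstep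
    have hsub : G.neighborFinset u ⊆ insert w (S.erase u) := by
      intro x hx
      rw [SimpleGraph.mem_neighborFinset] at hx
      rcases hothers x hx with rfl | hxS
      · exact Finset.mem_insert_self _ _
      · exact Finset.mem_insert_of_mem (Finset.mem_erase.mpr ⟨(G.ne_of_adj hx.symm), hxS⟩)
    have h1 : G.degree u ≤ (insert w (S.erase u)).card := by
      rw [← SimpleGraph.card_neighborFinset_eq_degree]
      exact Finset.card_le_card hsub
    have h2 : (insert w (S.erase u)).card ≤ (S.erase u).card + 1 := Finset.card_insert_le _ _
    have h3 : (S.erase u).card = S.card - 1 := Finset.card_erase_of_mem huS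
    have h4 : 1 ≤ S.card := Finset.card_pos.mpr ⟨u, huS⟩
    have h5 : G.minDegree ≤ G.degree u := G.minDegree_le_degree u
    omega

/-- Key counting lemma. -/
theorem key_count {W : Type*} (H : SimpleGraph W) (n₀ : ℕ) (β c : ℝ)
    (hTuran : ∀ n : ℕ, n₀ ≤ n → ∀ G' : SimpleGraph (Fin n),
      ¬ ContainsSubgraphCopy H G' → (G'.edgeSet.ncard : ℝ) ≤ β * (n : ℝ) ^ (1 + c))
    [Fintype V] (G : SimpleGraph V) [DecidableRel G.Adj]
    (hfree : ¬ ContainsSubgraphCopy H G) (B F : Finset V) (hFB : F ⊆ B)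
    (hN : ∀ u ∈ F, ∀ x, G.Adj u x → x ∈ B) (hn₀ : n₀ ≤ B.card) :
    (G.minDegree : ℝ) * F.card ≤ 2 * (β * (B.card : ℝ) ^ (1 + c)) := by
  classical
  set s : Set V := ↑B with hs
  let G₂ : SimpleGraph s := G.induce s
  have hc : Fintype.card s = B.card := by
    simp [s, Fintype.card_coe]
  let G' : SimpleGraph (Fin B.card) := G₂.overFin hc
  have hfree' : ¬ ContainsSubgraphCopy H G' := by
    rintro ⟨f, hf⟩
    refine hfree ⟨(f.trans (Fintype.equivFinOfCardEq hc).symm.toEmbedding).trans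
      (Function.Embedding.subtype _), fun a b hab => ?_⟩
    have := hf a b hab
    simpa [G', G₂, SimpleGraph.overFin] using this
  have hT := hTuran B.card hn₀ G' hfree'
  have hvs : ∀ u ∈ F, u ∈ s := fun u hu => by
    simpa [s] using hFB hu
  have hdeg : ∀ (v : s), v.1 ∈ F → G.degree v.1 ≤ G₂.degree v := by
    intro v hvF
    rw [← SimpleGraph.card_neighborFinset_eq_degree, ← SimpleGraph.card_neighborFinset_eq_degree]
    apply Finset.card_le_card_of_injOn
      (fun x => if h : G.Adj v.1 x then ⟨x, by simpa [s] using hN v.1 hvF x h⟩ else v)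
    · intro x hx
      rw [Finset.mem_coe, SimpleGraph.mem_neighborFinset] at hx
      rw [Finset.mem_coe, SimpleGraph.mem_neighborFinset]
      simp only [hx, dif_pos]
      exact hx
    · intro x hx y hy hxy
      simp only [Finset.mem_coe, SimpleGraph.mem_neighborFinset] at hx hy
      simp only [hx, hy, dif_pos] at hxy
      exact congrArg Subtype.val hxy
  let F' : Finset s := Finset.univ.filter (fun v => v.1 ∈ F)
  have hF'card : F'.card = F.card := by
    apply Finset.card_bij (fun v _ => v.1)
    · intro v hv; simpa [F'] using hv
    · intro v hv w hw h; exact Subtype.ext h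
    · intro u hu; exact ⟨⟨u, hvs u hu⟩, by simpa [F'], rfl⟩
  have hsum : G.minDegree * F.card ≤ 2 * G₂.edgeFinset.card := by
    rw [← SimpleGraph.sum_degrees_eq_twice_card_edges]
    calc G.minDegree * F.card = ∑ _v ∈ F', G.minDegree := by
          rw [Finset.sum_const, hF'card, smul_eq_mul, mul_comm]
      _ ≤ ∑ v ∈ F', G₂.degree v := by
          apply Finset.sum_le_sum
          intro v hv
          have hvF : v.1 ∈ F := by simpa [F'] using hv
          exact (G.minDegree_le_degree v.1).trans (hdeg v hvF)
      _ ≤ ∑ v, G₂.degree v := Finset.sum_le_sum_of_subset (Finset.subset_univ _)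
  have hcard : G₂.edgeFinset.card = G'.edgeSet.ncard := by
    rw [SimpleGraph.Iso.card_edgeFinset_eq (G₂.overFinIso hc)]
    rw [Set.ncard_eq_toFinset_card']
    convert rfl
    ext e
    simp [G']
  have : (G.minDegree : ℝ) * F.card ≤ 2 * (G'.edgeSet.ncard : ℝ) := by
    rw [← hcard]
    exact_mod_cast hsum
  linarith

/-- **Theorem 2**: if every `H`-free graph on `n ≥ n₀` vertices has at most `β n^(1+c)` edges,
then every `H`-free graph `G` with minimum degree `δ ≥ 2n₀` satisfies
`Z(G) ≥ 2^(-1-2/c) (δ/β)^(1/c)`. -/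
theorem zeroForcing_of_Hfree {W : Type*} [Fintype W] (H : SimpleGraph W)
    (n₀ : ℕ) (β c : ℝ) (hβ : 0 < β) (hc : 0 < c) (hc1 : c < 1)
    (hTuran : ∀ n : ℕ, n₀ ≤ n → ∀ G' : SimpleGraph (Fin n),
      ¬ ContainsSubgraphCopy H G' → (G'.edgeSet.ncard : ℝ) ≤ β * (n : ℝ) ^ (1 + c))
    {V : Type*} [Fintype V] [Nonempty V] (G : SimpleGraph V) [DecidableRel G.Adj]
    (hfree : ¬ ContainsSubgraphCopy H G) (hδ : 2 * n₀ ≤ G.minDegree) :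
    (2 : ℝ) ^ (-1 - 2 / c) * ((G.minDegree : ℝ) / β) ^ (1 / c) ≤ zeroForcingNumber G := by
  classical
  by_cases hδ0 : G.minDegree = 0
  · rw [hδ0]
    rw [Nat.cast_zero, zero_div, Real.zero_rpow (by positivity), mul_zero]
    positivity
  -- obtain an optimal zero forcing set
  have hne : {k | ∃ S : Finset V, S.card = k ∧ IsZeroForcingSet G ↑S}.Nonempty :=
    ⟨(Finset.univ : Finset V).card, Finset.univ, rfl, fun v => Forced.init v (by simp)⟩
  obtain ⟨S, hScard, hSzf⟩ := Nat.sInf_mem hne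
  have hZS : zeroForcingNumber G = S.card := hScard.symm
  rw [hZS]
  set k := S.card with hk
  have hreach := reach_univ hSzf
  have hδk : G.minDegree ≤ k := minDegree_le_card hreach
  have hkn : k ≤ Fintype.card V := by
    rw [← Finset.card_univ]
    exact Finset.card_le_univ S
  set n := Fintype.card V with hn
  set δ := G.minDegree with hδdef
  -- choose the stage B and forcers F
  obtain ⟨B, F, hFB, hNbd, hBcard, h2F⟩ :
      ∃ (B F : Finset V), F ⊆ B ∧ (∀ u ∈ F, ∀ x, G.Adj u x → x ∈ B) ∧
        B.card = min (2 * k) n ∧ min (2 * k) n ≤ 2 * F.card := by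
    rcases le_or_gt (2 * k) n with h2kn | hn2k
    · obtain ⟨B, hBreach, hBcard⟩ := reach_card hreach (2 * k)
        (by omega) (by rw [Finset.card_univ]; omega)
      obtain ⟨F, hFB, hFcard, hF⟩ := reach_forcers hBreach
      refine ⟨B, F, hFB, hF, by omega, by omega⟩
    · refine ⟨Finset.univ, Finset.univ, subset_rfl, fun u _ x _ => Finset.mem_univ x, ?_, ?_⟩
      · rw [Finset.card_univ]; omega
      · rw [Finset.card_univ]; omega
  set m := min (2 * k) n with hm
  have hn₀m : n₀ ≤ m := by omega
  have hm1 : 1 ≤ m := by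
    have : 1 ≤ n := Fintype.card_pos
    omega
  have hkey := key_count H n₀ β c hTuran G hfree B F hFB hNbd (hBcard ▸ hn₀m)
  rw [hBcard] at hkey
  -- derive δ * m ≤ 4 β m^{1+c}
  have hmpos : (0 : ℝ) < m := by exact_mod_cast hm1
  have hδnn : (0 : ℝ) ≤ (δ : ℝ) := Nat.cast_nonneg _
  have h2Fr : (m : ℝ) ≤ 2 * F.card := by exact_mod_cast h2F
  have hδm : (δ : ℝ) * m ≤ 4 * (β * (m : ℝ) ^ (1 + c)) := by
    have := mul_le_mul_of_nonneg_left h2Fr hδnn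
    nlinarith
  have hrpow : (m : ℝ) ^ (1 + c) = m * (m : ℝ) ^ c := by
    rw [Real.rpow_add hmpos, Real.rpow_one]
  have hδc : (δ : ℝ) / (4 * β) ≤ (m : ℝ) ^ c := by
    rw [div_le_iff₀ (by positivity)]
    rw [hrpow] at hδm
    have := (mul_le_mul_iff_left₀ hmpos).mp (by linarith : (δ : ℝ) * m ≤ (m : ℝ) ^ c * (4 * β) * m)
    linarith
  have hmc : ((δ : ℝ) / (4 * β)) ^ (1 / c) ≤ (m : ℝ) := by
    calc ((δ : ℝ) / (4 * β)) ^ (1 / c) ≤ ((m : ℝ) ^ c) ^ (1 / c) :=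
          Real.rpow_le_rpow (by positivity) hδc (by positivity)
      _ = (m : ℝ) ^ (c * (1 / c)) := (Real.rpow_mul hmpos.le _ _).symm
      _ = (m : ℝ) := by
          rw [mul_one_div_cancel hc.ne', Real.rpow_one]
  have hm2k : (m : ℝ) ≤ 2 * k := by
    have : m ≤ 2 * k := min_le_left _ _
    exact_mod_cast this
  -- rewrite the target
  have e4 : ((δ : ℝ) / (4 * β)) ^ (1 / c) = (2 : ℝ) ^ (-(2 / c)) * ((δ : ℝ) / β) ^ (1 / c) := by
    have h24 : (2 : ℝ) ^ (-(2 : ℝ)) = 1 / 4 := by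
      rw [Real.rpow_neg (by norm_num), show (2 : ℝ) ^ (2 : ℝ) = 4 by
        rw [show (2 : ℝ) = ((2 : ℕ) : ℝ) by norm_num, Real.rpow_natCast]; norm_num]
      norm_num
    have hsplit : (δ : ℝ) / (4 * β) = (2 : ℝ) ^ (-(2 : ℝ)) * ((δ : ℝ) / β) := by
      rw [h24]; ring
    rw [hsplit, Real.mul_rpow (by positivity) (by positivity),
      ← Real.rpow_mul (by norm_num : (0:ℝ) ≤ 2)]
    congr 1
    ring
  have e2 : (2 : ℝ) ^ (-1 - 2 / c) = 2⁻¹ * (2 : ℝ) ^ (-(2 / c)) := by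
    rw [show (-1 - 2 / c : ℝ) = (-1) + (-(2 / c)) by ring, Real.rpow_add (by norm_num),
      Real.rpow_neg_one]
  rw [e2]
  rw [e4] at hmc
  linarith
end ZeroForcing
end

section
/- Let H be a graph, n_0 ∈ ℕ, β_H > 0 and 0 < c_H < 1, and suppose that every H-free graph G_1 with average degree d ≥ n_0 satisfies |V(G_1)| ≥ (d/(2β_H))^{1/c_H}. Then every H-free graph G with minimum degree δ ≥ 2n_0 satisfies Z(G) ≥ (1/2) · (δ/(4β_H))^{1/c_H}. -/
namespace ZeroForcing

variable {V : Type*}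

/-! ### Auxiliary lemmas -/

lemma forced_mono {G : SimpleGraph V} {S T : Set V} (hST : S ⊆ T) {v : V}
    (h : Forced G S v) : Forced G T v := by
  induction h with
  | init v hv => exact .init v (hST hv)
  | force u w hu hadj hoth ihu ihoth => exact .force u w ihu hadj ihoth

lemma forced_empty {G : SimpleGraph V} {v : V} (h : Forced G (∅ : Set V) v) : False := by
  induction h with
  | init v hv => exact hv
  | force u w hu hadj hoth ihu ihoth => exact ihu

lemma exists_move {G : SimpleGraph V} {B : Set V} {v : V} (h : Forced G B v) :
    v ∉ B → ∃ u ∈ B, ∃ w, w ∉ B ∧ G.Adj u w ∧ ∀ x, G.Adj u x → x ≠ w → x ∈ B := by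
  induction h with
  | init v hv' => intro hv; exact absurd hv' hv
  | force u w hu hadj hoth ihu ihoth =>
    intro hw
    by_cases hu' : u ∈ B
    · by_cases hall : ∀ x, G.Adj u x → x ≠ w → x ∈ B
      · exact ⟨u, hu', w, hw, hadj, hall⟩
      · push_neg at hall
        obtain ⟨x, hx, hne, hxB⟩ := hall
        exact ihoth x hx hne hxB
    · exact ihu hu'

lemma step [Fintype V] [DecidableEq V] {G : SimpleGraph V} {S B U : Finset V}
    (hzf : IsZeroForcingSet G ↑S) (hSB : S ⊆ B) (hUB : U ⊆ B)
    (hBne : B ≠ Finset.univ)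
    (hU : ∀ u ∈ U, ∀ x, G.Adj u x → x ∈ B) :
    ∃ B' U' : Finset V, S ⊆ B' ∧ U' ⊆ B' ∧ B'.card = B.card + 1 ∧ U'.card = U.card + 1 ∧
      (∀ u ∈ U', ∀ x, G.Adj u x → x ∈ B') := by
  obtain ⟨v, hv⟩ : ∃ v, v ∉ B := by
    by_contra h; push_neg at h; exact hBne (Finset.eq_univ_iff_forall.2 h)
  have hf : Forced G (↑B : Set V) v :=
    forced_mono (Finset.coe_subset.2 hSB) (hzf v)
  obtain ⟨u, hu, w, hw, hadj, hall⟩ := exists_move hf (by simpa using hv)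
  rw [Finset.mem_coe] at hu
  have hwB : w ∉ B := by simpa using hw
  have huU : u ∉ U := fun huU => hwB (hU u huU w hadj)
  refine ⟨insert w B, insert u U, hSB.trans (Finset.subset_insert _ _), ?_, ?_, ?_, ?_⟩
  · intro x hx
    rcases Finset.mem_insert.1 hx with rfl | hx
    · exact Finset.mem_insert_of_mem hu
    · exact Finset.mem_insert_of_mem (hUB hx)
  · exact Finset.card_insert_of_notMem hwB
  · exact Finset.card_insert_of_notMem huU
  · intro u' hu' x hx
    rcases Finset.mem_insert.1 hu' with rfl | hu'
    · by_cases hxw : x = w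
      · subst hxw; exact Finset.mem_insert_self _ _
      · exact Finset.mem_insert_of_mem (by simpa using hall x hx hxw)
    · exact Finset.mem_insert_of_mem (hU u' hu' x hx)

lemma chain [Fintype V] [DecidableEq V] {G : SimpleGraph V} {S : Finset V}
    (hzf : IsZeroForcingSet G ↑S) (t : ℕ) :
    ∃ B U : Finset V, S ⊆ B ∧ U ⊆ B ∧ B.card = S.card + U.card ∧ U.card ≤ t ∧
      (∀ u ∈ U, ∀ x, G.Adj u x → x ∈ B) ∧ (U.card = t ∨ B = Finset.univ) := by
  induction t with
  | zero =>
    exact ⟨S, ∅, Finset.Subset.refl S, Finset.empty_subset S, by simp, le_refl _,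
      by simp, Or.inl rfl⟩
  | succ t ih =>
    obtain ⟨B, U, hSB, hUB, hcard, hle, hU, hdisj⟩ := ih
    rcases hdisj with hUt | hBuniv
    · by_cases hBne : B = Finset.univ
      · exact ⟨B, U, hSB, hUB, hcard, hle.trans (Nat.le_succ t), hU, Or.inr hBne⟩
      · obtain ⟨B', U', hSB', hUB', hB'c, hU'c, hU'⟩ := step hzf hSB hUB hBne hU
        exact ⟨B', U', hSB', hUB', by omega, by omega, hU', Or.inl (by omega)⟩
    · exact ⟨B, U, hSB, hUB, hcard, hle.trans (Nat.le_succ t), hU, Or.inr hBuniv⟩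

lemma free_comap {W V V' : Type*} {H : SimpleGraph W} {G : SimpleGraph V} {f : V' → V}
    (hf : Function.Injective f)
    (hfree : ¬ ContainsSubgraphCopy H G) : ¬ ContainsSubgraphCopy H (G.comap f) := by
  rintro ⟨g, hg⟩
  exact hfree ⟨g.trans ⟨f, hf⟩, fun a b hab => hg a b hab⟩

lemma transfer {W : Type*} (H : SimpleGraph W) (n₀ : ℕ) (β c : ℝ)
    (hyp : ∀ n : ℕ, ∀ G₁ : SimpleGraph (Fin n), ¬ ContainsSubgraphCopy H G₁ →
      (n₀ : ℝ) ≤ 2 * (G₁.edgeSet.ncard : ℝ) / n →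
      ((2 * (G₁.edgeSet.ncard : ℝ) / n) / (2 * β)) ^ (1 / c) ≤ (n : ℝ))
    {V' : Type*} [Fintype V'] (G' : SimpleGraph V')
    (hfree : ¬ ContainsSubgraphCopy H G')
    (hd : (n₀ : ℝ) ≤ 2 * (G'.edgeSet.ncard : ℝ) / (Fintype.card V')) :
    ((2 * (G'.edgeSet.ncard : ℝ) / (Fintype.card V')) / (2 * β)) ^ (1 / c)
      ≤ (Fintype.card V' : ℝ) := by
  classical
  set n := Fintype.card V' with hn
  let e : Fin n ≃ V' := (Fintype.equivFin V').symm
  let G₁ : SimpleGraph (Fin n) := G'.comap e.toEmbedding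
  have hiso : G₁ ≃g G' := SimpleGraph.Iso.comap e G'
  have hcard : G₁.edgeSet.ncard = G'.edgeSet.ncard := by
    rw [Set.ncard_eq_toFinset_card', Set.ncard_eq_toFinset_card']
    exact hiso.card_edgeFinset_eq
  have := hyp n G₁ (free_comap e.toEmbedding.injective hfree) (by rw [hcard]; exact hd)
  rwa [hcard] at this

lemma count {V : Type*} [Fintype V] {G : SimpleGraph V} [DecidableRel G.Adj]
    {B U : Finset V} (hUB : U ⊆ B)
    (hU : ∀ u ∈ U, ∀ x, G.Adj u x → x ∈ B) :
    ∑ u ∈ U, G.degree u ≤ 2 * (G.comap (fun b : B => (b : V))).edgeSet.ncard := by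
  classical
  set G' := G.comap (fun b : B => (b : V)) with hG'
  have hdeg : ∀ u (hu : u ∈ U), G'.degree ⟨u, hUB hu⟩ = G.degree u := by
    intro u hu
    unfold SimpleGraph.degree
    refine Finset.card_bij (fun b _ => (b : V)) ?_ ?_ ?_
    · intro b hb
      rw [SimpleGraph.mem_neighborFinset] at hb ⊢
      exact hb
    · intro a _ b _ hab
      exact Subtype.ext hab
    · intro x hx
      rw [SimpleGraph.mem_neighborFinset] at hx
      exact ⟨⟨x, hU u hu x hx⟩, by rw [SimpleGraph.mem_neighborFinset]; exact hx, rfl⟩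
  set g : V → ℕ := fun v => if h : v ∈ B then G'.degree ⟨v, h⟩ else 0 with hg
  have h1 : ∑ b : {x // x ∈ B}, G'.degree b = ∑ v ∈ B, g v := by
    rw [← Finset.sum_attach B g, Finset.univ_eq_attach]
    refine Finset.sum_congr rfl fun b _ => ?_
    simp only [hg]
    rw [dif_pos b.2]
  have h3 : ∀ v ∈ U, g v = G.degree v := by
    intro v hv
    simp only [hg]
    rw [dif_pos (hUB hv)]
    exact hdeg v hv
  have hE : G'.edgeSet.ncard = G'.edgeFinset.card := by
    rw [Set.ncard_eq_toFinset_card']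
    exact congrArg Finset.card (Set.toFinset_congr rfl)
  calc ∑ u ∈ U, G.degree u = ∑ u ∈ U, g u := Finset.sum_congr rfl fun v hv => (h3 v hv).symm
    _ ≤ ∑ v ∈ B, g v := Finset.sum_le_sum_of_subset hUB
    _ = ∑ b : {x // x ∈ B}, G'.degree b := h1.symm
    _ = 2 * G'.edgeFinset.card := SimpleGraph.sum_degrees_eq_twice_card_edges G'
    _ = 2 * G'.edgeSet.ncard := by rw [hE]

/-- **Claim 1**: if every `H`-free graph `G₁` with average degree `d ≥ n₀` satisfies
`|V(G₁)| ≥ (d/(2β))^(1/c)`, then every `H`-free graph `G` with minimum degree `δ ≥ 2n₀`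
satisfies `Z(G) ≥ (1/2) (δ/(4β))^(1/c)`. -/
theorem zeroForcing_of_Hfree_claim {W : Type*} [Fintype W] (H : SimpleGraph W)
    (n₀ : ℕ) (β c : ℝ) (hβ : 0 < β) (hc : 0 < c) (hc1 : c < 1)
    (hyp : ∀ n : ℕ, ∀ G₁ : SimpleGraph (Fin n), ¬ ContainsSubgraphCopy H G₁ →
      (n₀ : ℝ) ≤ 2 * (G₁.edgeSet.ncard : ℝ) / n →
      ((2 * (G₁.edgeSet.ncard : ℝ) / n) / (2 * β)) ^ (1 / c) ≤ (n : ℝ))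
    {V : Type*} [Fintype V] [Nonempty V] (G : SimpleGraph V) [DecidableRel G.Adj]
    (hfree : ¬ ContainsSubgraphCopy H G) (hδ : 2 * n₀ ≤ G.minDegree) :
    (1 / 2 : ℝ) * ((G.minDegree : ℝ) / (4 * β)) ^ (1 / c) ≤ zeroForcingNumber G := by
  classical
  have hne : {m | ∃ S : Finset V, S.card = m ∧ IsZeroForcingSet G ↑S}.Nonempty :=
    ⟨(Finset.univ : Finset V).card, Finset.univ, rfl, fun v => .init v (by simp)⟩
  obtain ⟨S, hScard, hS⟩ := Nat.sInf_mem hne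
  have hScard' : S.card = zeroForcingNumber G := hScard
  set k := zeroForcingNumber G with hkdef
  set δ := G.minDegree with hδdef
  have hk1 : 1 ≤ k := by
    by_contra h
    push_neg at h
    have hk0 : S = ∅ := Finset.card_eq_zero.1 (by omega)
    obtain ⟨v⟩ := ‹Nonempty V›
    subst hk0
    exact forced_empty (by simpa using hS v)
  obtain ⟨B, U, hSB, hUB, hBcard, hUle, hclosed, hdisj⟩ := chain hS k
  have hc' : (0 : ℝ) ≤ 1 / c := by positivity
  have hδ0 : (0 : ℝ) ≤ (δ : ℝ) := Nat.cast_nonneg δ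
  have hkR : (1 : ℝ) ≤ (k : ℝ) := by exact_mod_cast hk1
  rcases hdisj with hUk | hBuniv
  · -- |U| = k : use the induced subgraph on B, which has 2k vertices
    set G' := G.comap (fun b : B => (b : V)) with hG'
    have hfree' : ¬ ContainsSubgraphCopy H G' :=
      free_comap Subtype.val_injective hfree
    have hsum : U.card * δ ≤ ∑ u ∈ U, G.degree u := by
      calc U.card * δ = ∑ _u ∈ U, δ := by rw [Finset.sum_const, smul_eq_mul]
        _ ≤ ∑ u ∈ U, G.degree u := Finset.sum_le_sum fun u _ => G.minDegree_le_degree u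
    have hEnat : k * δ ≤ 2 * G'.edgeSet.ncard := by
      rw [← hUk]
      exact hsum.trans (count hUB hclosed)
    have hcardB : Fintype.card {x // x ∈ B} = 2 * k := by
      rw [Fintype.card_coe]
      omega
    set E := G'.edgeSet.ncard with hEdef
    have hER : (k : ℝ) * δ ≤ 2 * E := by exact_mod_cast hEnat
    have hbase : (δ : ℝ) / 2 ≤ 2 * (E : ℝ) / (Fintype.card {x // x ∈ B}) := by
      rw [hcardB]
      push_cast
      rw [div_le_div_iff₀ (by norm_num) (by positivity)]
      nlinarith [hER]
    have hd : (n₀ : ℝ) ≤ 2 * (E : ℝ) / (Fintype.card {x // x ∈ B}) := by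
      refine le_trans ?_ hbase
      have : (2 * n₀ : ℝ) ≤ (δ : ℝ) := by exact_mod_cast hδ
      linarith
    have htrans := transfer H n₀ β c hyp G' hfree' hd
    rw [hcardB] at htrans hbase
    have hbase2 : (δ : ℝ) / (4 * β) ≤ (2 * (E : ℝ) / ((2 * k : ℕ) : ℝ)) / (2 * β) := by
      have h4 : (δ : ℝ) / (4 * β) = ((δ : ℝ) / 2) / (2 * β) := by
        rw [div_div]; congr 1; ring
      rw [h4]
      gcongr
    have hrpow : ((δ : ℝ) / (4 * β)) ^ (1 / c) ≤
        ((2 * (E : ℝ) / ((2 * k : ℕ) : ℝ)) / (2 * β)) ^ (1 / c) :=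
      Real.rpow_le_rpow (by positivity) hbase2 hc'
    have hfin : ((δ : ℝ) / (4 * β)) ^ (1 / c) ≤ ((2 * k : ℕ) : ℝ) := hrpow.trans htrans
    push_cast at hfin
    linarith
  · -- B = univ : |V| ≤ 2k, use G itself
    have hn : Fintype.card V = S.card + U.card := by
      rw [← Finset.card_univ, ← hBuniv, hBcard]
    have hnle : Fintype.card V ≤ 2 * k := by omega
    have hnpos : 0 < Fintype.card V := Fintype.card_pos
    set n := Fintype.card V with hndef
    set E := G.edgeSet.ncard with hEdef
    have hEfin : E = G.edgeFinset.card := by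
      rw [hEdef, Set.ncard_eq_toFinset_card']
      exact congrArg Finset.card (Set.toFinset_congr rfl)
    have hsum : n * δ ≤ 2 * E := by
      rw [hEfin]
      calc n * δ = ∑ _v : V, δ := by
            rw [Finset.sum_const, smul_eq_mul, Finset.card_univ]
        _ ≤ ∑ v : V, G.degree v := Finset.sum_le_sum fun v _ => G.minDegree_le_degree v
        _ = 2 * G.edgeFinset.card := SimpleGraph.sum_degrees_eq_twice_card_edges G
    have hER : (n : ℝ) * δ ≤ 2 * E := by exact_mod_cast hsum
    have hnR : (0 : ℝ) < (n : ℝ) := by exact_mod_cast hnpos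
    have hbase : (δ : ℝ) ≤ 2 * (E : ℝ) / n := by
      rw [le_div_iff₀ hnR]
      nlinarith
    have hd : (n₀ : ℝ) ≤ 2 * (E : ℝ) / n := by
      refine le_trans ?_ hbase
      have : (2 * n₀ : ℝ) ≤ (δ : ℝ) := by exact_mod_cast hδ
      linarith
    have htrans := transfer H n₀ β c hyp G hfree hd
    have hbase2 : (δ : ℝ) / (4 * β) ≤ (2 * (E : ℝ) / n) / (2 * β) := by
      have h1 : (δ : ℝ) / (4 * β) ≤ (δ : ℝ) / (2 * β) := by
        rw [div_le_div_iff₀ (by positivity) (by positivity)]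
        nlinarith
      refine h1.trans ?_
      gcongr
    have hrpow : ((δ : ℝ) / (4 * β)) ^ (1 / c) ≤
        ((2 * (E : ℝ) / n) / (2 * β)) ^ (1 / c) :=
      Real.rpow_le_rpow (by positivity) hbase2 hc'
    have hfin : ((δ : ℝ) / (4 * β)) ^ (1 / c) ≤ (n : ℝ) := hrpow.trans htrans
    have h2k : (n : ℝ) ≤ 2 * k := by exact_mod_cast hnle
    linarith

end ZeroForcing
end

section
/- Let 2 ≤ a ≤ b be integers and let G be a K_{a,b}-free graph with minimum degree δ ≥ 4a−4. Then Z(G) ≥ (1/2) · (δ/(4(b−1)^{1/a}))^{a/(a−1)}. -/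
namespace ZeroForcing

variable {V : Type*}

/-! ### Auxiliary machinery -/

/-- The stepwise version of the zero forcing closure. -/
def forcedSet (G : SimpleGraph V) (S : Set V) : ℕ → Set V
  | 0 => S
  | (n+1) => forcedSet G S n ∪
      {w | ∃ u ∈ forcedSet G S n, G.Adj u w ∧ ∀ x, G.Adj u x → x ≠ w → x ∈ forcedSet G S n}

lemma forcedSet_mono (G : SimpleGraph V) (S : Set V) : Monotone (forcedSet G S) :=
  monotone_nat_of_le_succ fun _ => Set.subset_union_left

lemma exists_forcedSet [Fintype V] {G : SimpleGraph V} {S : Set V} {v : V}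
    (h : Forced G S v) : ∃ n, v ∈ forcedSet G S n := by
  induction h with
  | init v hv => exact ⟨0, hv⟩
  | force u w hu hadj hothers ihu ihoth =>
    classical
    set rk : V → ℕ := fun x => sInf {n | x ∈ forcedSet G S n} with hrk
    set N : ℕ := Finset.univ.sup rk with hN
    have hmem : ∀ x : V, (∃ n, x ∈ forcedSet G S n) → x ∈ forcedSet G S N := by
      intro x hx
      exact forcedSet_mono G S (Finset.le_sup (Finset.mem_univ x)) (Nat.sInf_mem hx)
    exact ⟨N + 1, Or.inr ⟨u, hmem u ihu, hadj, fun x hx hne => hmem x (ihoth x hx hne)⟩⟩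

/-- There is an injective `ℕ`-valued key which is strictly monotone in a given rank. -/
lemma exists_good_key [Fintype V] (rk : V → ℕ) :
    ∃ key : V → ℕ, Function.Injective key ∧ ∀ v w, rk v < rk w → key v < key w := by
  classical
  set n := Fintype.card V with hn
  set e := Fintype.equivFin V with he
  refine ⟨fun v => rk v * n + (e v : ℕ), ?_, ?_⟩
  · intro v w h
    simp only at h
    have hv : (e v : ℕ) < n := (e v).2
    have hw : (e w : ℕ) < n := (e w).2
    have hrkeq : rk v = rk w := by
      rcases Nat.lt_trichotomy (rk v) (rk w) with hlt | heq | hgt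
      · nlinarith [Nat.succ_le_of_lt hlt]
      · exact heq
      · nlinarith [Nat.succ_le_of_lt hgt]
    have hev : (e v : ℕ) = (e w : ℕ) := by rw [hrkeq] at h; omega
    exact e.injective (Fin.val_injective hev)
  · intro v w h
    simp only
    have hv : (e v : ℕ) < n := (e v).2
    have h2 : (rk v + 1) * n ≤ rk w * n := Nat.mul_le_mul_right n h
    nlinarith

/-- From a zero forcing set, extract a key and a witness function:
every vertex outside `S` is forced by a vertex `uu v` all of whose other neighbours
come strictly earlier (or lie in `S`). -/
lemma exists_witness [Fintype V] (G : SimpleGraph V) (S : Set V)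
    (hS : ∀ v, Forced G S v) :
    ∃ (key : V → ℕ) (uu : V → V), Function.Injective key ∧
      ∀ v, v ∉ S → G.Adj (uu v) v ∧ (uu v ∈ S ∨ key (uu v) < key v) ∧
        ∀ x, G.Adj (uu v) x → x ≠ v → (x ∈ S ∨ key x < key v) := by
  classical
  set rk : V → ℕ := fun x => sInf {n | x ∈ forcedSet G S n} with hrk
  have hrkmem : ∀ v, v ∈ forcedSet G S (rk v) := fun v => Nat.sInf_mem (exists_forcedSet (hS v))
  have hrkle : ∀ x n, x ∈ forcedSet G S n → rk x ≤ n := fun x n hx => Nat.sInf_le hx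
  obtain ⟨key, hkeyinj, hkeymono⟩ := exists_good_key rk
  have main : ∀ v, v ∉ S → ∃ u, G.Adj u v ∧ (u ∈ S ∨ key u < key v) ∧
      ∀ x, G.Adj u x → x ≠ v → (x ∈ S ∨ key x < key v) := by
    intro v hv
    have hrk1 : 1 ≤ rk v := by
      rcases Nat.eq_zero_or_pos (rk v) with h0 | h
      · exfalso
        apply hv
        have h' := hrkmem v
        rw [h0] at h'
        exact h'
      · exact h
    have hvmem : v ∈ forcedSet G S ((rk v - 1) + 1) := by
      have := hrkmem v
      rwa [show rk v - 1 + 1 = rk v by omega]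
    have hvnot : v ∉ forcedSet G S (rk v - 1) := by
      intro hmem
      exact absurd (hrkle v _ hmem) (by omega)
    have hstep : ∀ x, x ∈ forcedSet G S (rk v - 1) → (x ∈ S ∨ key x < key v) := by
      intro x hx
      by_cases hxS : x ∈ S
      · exact Or.inl hxS
      · refine Or.inr (hkeymono x v ?_)
        have := hrkle x _ hx
        omega
    rcases hvmem with hmem | ⟨u, hu, hadj, hoth⟩
    · exact absurd hmem hvnot
    · exact ⟨u, hadj, hstep u hu, fun x hx hne => hstep x (hoth x hx hne)⟩
  choose uu h1 h2 h3 using fun v => fun hv : v ∉ S => main v hv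
  exact ⟨key, fun v => if hv : v ∉ S then uu v hv else v, hkeyinj, by
    intro v hv
    simp only [dif_pos hv]
    exact ⟨h1 v hv, h2 v hv, h3 v hv⟩⟩

/-- Initial segments of a finite set with respect to an injective key. -/
lemma exists_initial_seg {α : Type*} [DecidableEq α] (F : Finset α) (key : α → ℕ)
    (hinj : Function.Injective key) :
    ∀ k, k ≤ F.card → ∃ T ⊆ F, T.card = k ∧ ∀ v ∈ T, ∀ x ∈ F, x ∉ T → key v < key x := by
  intro k
  induction k with
  | zero => exact fun _ => ⟨∅, Finset.empty_subset F, Finset.card_empty, by simp⟩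
  | succ k ih =>
    intro hk
    obtain ⟨T, hTF, hTcard, hT⟩ := ih (Nat.le_of_succ_le hk)
    have hne : (F \ T).Nonempty := by
      rw [← Finset.card_pos, Finset.card_sdiff_of_subset hTF, hTcard]
      omega
    obtain ⟨x₀, hx₀, hx₀min⟩ := Finset.exists_min_image (F \ T) key hne
    rw [Finset.mem_sdiff] at hx₀
    refine ⟨insert x₀ T, Finset.insert_subset hx₀.1 hTF, ?_, ?_⟩
    · rw [Finset.card_insert_of_notMem hx₀.2, hTcard]
    · intro v hv x hx hxT
      have hxT' : x ∉ T := fun h => hxT (Finset.mem_insert_of_mem h)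
      rcases Finset.mem_insert.1 hv with rfl | hv
      · have hle : key v ≤ key x := hx₀min x (Finset.mem_sdiff.2 ⟨hx, hxT'⟩)
        have hne' : x ≠ v := fun h => hxT (h ▸ Finset.mem_insert_self _ _)
        exact lt_of_le_of_ne hle fun h => hne' (hinj h.symm)
      · exact hT v hv x hx hxT'

/-- If `G` is `K_{a,b}`-free, any `a`-set has at most `b-1` common neighbours. -/
lemma common_nbrs_le [Fintype V] [DecidableEq V] {G : SimpleGraph V} [DecidableRel G.Adj]
    {a b : ℕ}
    (hfree : ¬ ContainsSubgraphCopy (completeBipartiteGraph (Fin a) (Fin b)) G)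
    (U : Finset V) (A : Finset V) (hA : A.card = a) :
    (U.filter (fun u => A ⊆ G.neighborFinset u)).card ≤ b - 1 := by
  by_contra hcon
  push_neg at hcon
  have hb : b ≤ (U.filter (fun u => A ⊆ G.neighborFinset u)).card := by
    rcases Nat.eq_zero_or_pos b with rfl | hbpos
    · omega
    · omega
  obtain ⟨B, hBsub, hBcard⟩ := Finset.exists_subset_card_eq hb
  have hBadj : ∀ v ∈ B, ∀ x ∈ A, G.Adj v x := by
    intro v hv x hx
    have := (Finset.mem_filter.1 (hBsub hv)).2 hx
    exact (SimpleGraph.mem_neighborFinset _ _ _).1 this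
  have eA : Fin a ≃ A := (A.equivFinOfCardEq hA).symm
  have eB : Fin b ≃ B := (B.equivFinOfCardEq hBcard).symm
  have hdisj : ∀ (i : Fin a) (j : Fin b), (eA i : V) ≠ (eB j : V) := by
    intro i j h
    have hadj := hBadj _ (eB j).2 _ (eA i).2
    rw [← h] at hadj
    exact G.irrefl hadj
  refine hfree ⟨⟨Sum.elim (fun i => (eA i : V)) (fun j => (eB j : V)), ?_⟩, ?_⟩
  · intro p q h
    rcases p with i | i <;> rcases q with j | j <;> simp only [Sum.elim_inl, Sum.elim_inr] at h
    · have : eA i = eA j := Subtype.ext h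
      rw [eA.injective this]
    · exact absurd h (hdisj i j)
    · exact absurd h.symm (hdisj j i)
    · have : eB i = eB j := Subtype.ext h
      rw [eB.injective this]
  · intro p q hpq
    rcases p with i | i <;> rcases q with j | j <;>
      skip
    · simp [completeBipartiteGraph_adj] at hpq
    · exact (hBadj _ (eB j).2 _ (eA i).2).symm
    · exact hBadj _ (eB i).2 _ (eA j).2
    · simp [completeBipartiteGraph_adj] at hpq

/-- KST-type counting: if every vertex of `U` has all neighbours in `Wf` and degree ≥ δ,
then `#U * C(δ,a) ≤ (b-1) * C(#Wf, a)`. -/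
lemma counting [Fintype V] [DecidableEq V] {G : SimpleGraph V} [DecidableRel G.Adj]
    {a b : ℕ}
    (hfree : ¬ ContainsSubgraphCopy (completeBipartiteGraph (Fin a) (Fin b)) G)
    (U Wf : Finset V) {δ : ℕ}
    (hnb : ∀ u ∈ U, G.neighborFinset u ⊆ Wf)
    (hdeg : ∀ u ∈ U, δ ≤ G.degree u) :
    U.card * δ.choose a ≤ (b - 1) * Wf.card.choose a := by
  classical
  calc U.card * δ.choose a = ∑ u ∈ U, δ.choose a := by
        rw [Finset.sum_const, smul_eq_mul]
    _ ≤ ∑ u ∈ U, (G.degree u).choose a :=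
        Finset.sum_le_sum fun u hu => Nat.choose_le_choose a (hdeg u hu)
    _ = ∑ u ∈ U, ((Wf.powersetCard a).filter (fun A => A ⊆ G.neighborFinset u)).card := by
        refine Finset.sum_congr rfl fun u hu => ?_
        rw [← SimpleGraph.card_neighborFinset_eq_degree, ← Finset.card_powersetCard]
        congr 1
        ext A
        simp only [Finset.mem_powersetCard, Finset.mem_filter]
        exact ⟨fun ⟨h1, h2⟩ => ⟨⟨h1.trans (hnb u hu), h2⟩, h1⟩, fun ⟨⟨_, h2⟩, h3⟩ => ⟨h3, h2⟩⟩
    _ = ∑ A ∈ Wf.powersetCard a, (U.filter (fun u => A ⊆ G.neighborFinset u)).card := by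
        simp only [Finset.card_filter]
        rw [Finset.sum_comm]
    _ ≤ ∑ A ∈ Wf.powersetCard a, (b - 1) :=
        Finset.sum_le_sum fun A hA =>
          common_nbrs_le hfree U A (Finset.mem_powersetCard.1 hA).2
    _ = (b - 1) * Wf.card.choose a := by
        rw [Finset.sum_const, smul_eq_mul, Finset.card_powersetCard, mul_comm]

/-- The key real-power manipulation. -/
lemma rpow_helper (a : ℕ) (ha : 2 ≤ a) {D w y : ℝ} (hD : 0 ≤ D) (hw : 0 < w) (hy : 0 < y)
    (h : D ^ a ≤ w ^ a * y ^ (a - 1)) :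
    (D / w) ^ ((a : ℝ) / ((a : ℝ) - 1)) ≤ y := by
  have ha2 : (2 : ℝ) ≤ (a : ℝ) := by exact_mod_cast ha
  have ha1 : (0 : ℝ) < (a : ℝ) - 1 := by linarith
  have hc : (D / w) ^ a ≤ y ^ (a - 1) := by
    rw [div_pow, div_le_iff₀ (by positivity)]
    linarith [h]
  have hc0 : (0 : ℝ) ≤ D / w := by positivity
  have hcast : ((a - 1 : ℕ) : ℝ) = (a : ℝ) - 1 := by
    rw [Nat.cast_sub (by omega), Nat.cast_one]
  have hc' : (D / w) ^ ((a : ℕ) : ℝ) ≤ y ^ ((a : ℝ) - 1) := by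
    rw [Real.rpow_natCast, ← hcast, Real.rpow_natCast]
    exact hc
  have := Real.rpow_le_rpow (by positivity) hc' (by positivity : (0:ℝ) ≤ ((a : ℝ) - 1)⁻¹)
  rw [← Real.rpow_mul hc0, ← Real.rpow_mul hy.le,
    mul_inv_cancel₀ (ne_of_gt ha1), Real.rpow_one, ← div_eq_mul_inv] at this
  exact this

/-- **Corollary 1**: if `2 ≤ a ≤ b` and `G` is `K_{a,b}`-free with minimum degree
`δ ≥ 4a - 4`, then `Z(G) ≥ (1/2) (δ / (4 (b-1)^(1/a)))^(a/(a-1))`. -/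
theorem zeroForcing_of_Kab_free (a b : ℕ) (ha : 2 ≤ a) (hab : a ≤ b)
    {V : Type*} [Fintype V] [Nonempty V] (G : SimpleGraph V) [DecidableRel G.Adj]
    (hfree : ¬ ContainsSubgraphCopy (completeBipartiteGraph (Fin a) (Fin b)) G)
    (hδ : 4 * a - 4 ≤ G.minDegree) :
    (1 / 2 : ℝ) * ((G.minDegree : ℝ) / (4 * ((b : ℝ) - 1) ^ (1 / (a : ℝ)))) ^ ((a : ℝ) / ((a : ℝ) - 1))
      ≤ zeroForcingNumber G := by
  classical
  set Z := zeroForcingNumber G with hZdef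
  set δ := G.minDegree with hδdef
  set x : ℝ := ((b : ℝ) - 1) ^ (1 / (a : ℝ)) with hxdef
  set t : ℝ := (a : ℝ) / ((a : ℝ) - 1) with htdef
  have hb2 : 2 ≤ b := le_trans ha hab
  have haR : (2 : ℝ) ≤ (a : ℝ) := by exact_mod_cast ha
  have ht0 : (0 : ℝ) ≤ t := div_nonneg (by positivity) (by linarith)
  have hb1 : (1 : ℝ) ≤ (b : ℝ) - 1 := by
    have : (2 : ℝ) ≤ (b : ℝ) := by exact_mod_cast hb2
    linarith
  have hx1 : 1 ≤ x := Real.one_le_rpow hb1 (by positivity)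
  have hx0 : (0 : ℝ) < x := lt_of_lt_of_le one_pos hx1
  have hxa : x ^ a = (b : ℝ) - 1 := by
    rw [hxdef, ← Real.rpow_natCast (((b : ℝ) - 1) ^ (1 / (a : ℝ))) a,
      ← Real.rpow_mul (by linarith), one_div,
      inv_mul_cancel₀ (show (a : ℝ) ≠ 0 by positivity), Real.rpow_one]
  -- a minimum zero forcing set
  have hZmem : Z ∈ {k | ∃ S : Finset V, S.card = k ∧ IsZeroForcingSet G ↑S} :=
    Nat.sInf_mem ⟨(Finset.univ : Finset V).card, Finset.univ, rfl,
      fun v => Forced.init v (by simp)⟩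
  obtain ⟨S, hScard, hSforce⟩ := hZmem
  obtain ⟨v₀⟩ := ‹Nonempty V›
  have hZ1 : 1 ≤ Z := by
    rcases Nat.eq_zero_or_pos Z with h0 | h
    · exfalso
      have hS0 : S = ∅ := Finset.card_eq_zero.1 (hScard.trans h0)
      have := hSforce v₀
      rw [hS0] at this
      exact forced_empty (by simpa using this)
    · exact h
  -- key numeric data
  have hδa : a ≤ δ := by omega
  have hDn1 : 1 ≤ δ + 1 - a := by omega
  set Dn : ℕ := δ + 1 - a with hDndef
  set D : ℝ := (Dn : ℝ) with hDdef
  have hD0 : (0 : ℝ) < D := by rw [hDdef]; exact_mod_cast hDn1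
  have hD2 : (δ : ℝ) ≤ 2 * D := by
    have h : δ ≤ 2 * Dn := by omega
    rw [hDdef]
    exact_mod_cast h
  have hD4 : (δ : ℝ) ≤ 4 * D := by
    have h : δ ≤ 4 * Dn := by omega
    rw [hDdef]
    exact_mod_cast h
  have hB1cast : ((b - 1 : ℕ) : ℝ) = (b : ℝ) - 1 := by
    rw [Nat.cast_sub (by omega), Nat.cast_one]
  have hpow_split : ∀ y : ℝ, y ^ a = y ^ (a - 1) * y := by
    intro y
    conv_lhs => rw [show a = (a - 1) + 1 by omega]
    rw [pow_succ]
  set n := Fintype.card V with hn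
  have hn1 : 1 ≤ n := Fintype.card_pos
  obtain ⟨key, uu, hkeyinj, hwit⟩ := exists_witness G (↑S) hSforce
  by_cases hcase : 2 * Z ≤ n
  · -- main case: at least Z vertices outside S
    set F : Finset V := Sᶜ with hF
    have hFcard : F.card = n - Z := by rw [hF, Finset.card_compl, hScard]
    have hkZ : Z ≤ F.card := by omega
    obtain ⟨T, hTF, hTcard, hTgood⟩ := exists_initial_seg F key hkeyinj Z hkZ
    have hTnotS : ∀ v ∈ T, v ∉ (↑S : Set V) := by
      intro v hv
      simpa using Finset.mem_compl.1 (hTF hv)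
    set Wf : Finset V := S ∪ T with hWf
    have hdisj : Disjoint S T :=
      Finset.disjoint_left.2 fun y hyS hyT => (Finset.mem_compl.1 (hTF hyT)) hyS
    have hWcard : Wf.card = 2 * Z := by
      rw [hWf, Finset.card_union_of_disjoint hdisj, hScard, hTcard]
      ring
    have hmemW : ∀ v ∈ T, ∀ y : V, (y ∈ (↑S : Set V) ∨ key y < key v) → y ∈ Wf := by
      intro v hv y hy
      rcases hy with hy | hy
      · exact Finset.mem_union_left _ (by simpa using hy)
      · by_cases hyS : y ∈ S
        · exact Finset.mem_union_left _ hyS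
        · by_cases hyT : y ∈ T
          · exact Finset.mem_union_right _ hyT
          · exact absurd hy (not_lt.2 (le_of_lt (hTgood v hv y (Finset.mem_compl.2 hyS) hyT)))
    set U : Finset V := T.image uu with hU
    have hUinj : Set.InjOn uu ↑T := by
      intro v hv w hw h
      by_contra hne
      obtain ⟨hadjv, _, hothv⟩ := hwit v (hTnotS v hv)
      obtain ⟨hadjw, _, hothw⟩ := hwit w (hTnotS w hw)
      have h1 := hothv w (by rw [h]; exact hadjw) (Ne.symm hne)
      have h2 := hothw v (by rw [← h]; exact hadjv) hne
      rcases h1 with h1 | h1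
      · exact hTnotS w hw h1
      rcases h2 with h2 | h2
      · exact hTnotS v hv h2
      omega
    have hUcard : U.card = Z := by
      rw [hU, Finset.card_image_of_injOn hUinj, hTcard]
    have hnb : ∀ u ∈ U, G.neighborFinset u ⊆ Wf := by
      intro u hu
      obtain ⟨v, hvT, rfl⟩ := Finset.mem_image.1 hu
      intro y hy
      rw [SimpleGraph.mem_neighborFinset] at hy
      obtain ⟨hadj, _, hoth⟩ := hwit v (hTnotS v hvT)
      by_cases hyv : y = v
      · subst hyv
        exact Finset.mem_union_right _ hvT
      · exact hmemW v hvT y (hoth y hy hyv)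
    have hdeg : ∀ u ∈ U, δ ≤ G.degree u := fun u _ => G.minDegree_le_degree u
    have hcount := counting hfree U Wf hnb hdeg
    rw [hUcard, hWcard] at hcount
    have hnat : Z * Dn ^ a ≤ (b - 1) * (2 * Z) ^ a := by
      have h1 : Dn ^ a ≤ Nat.descFactorial δ a := Nat.pow_sub_le_descFactorial δ a
      have h2 : Nat.descFactorial (2 * Z) a ≤ (2 * Z) ^ a := Nat.descFactorial_le_pow _ _
      rw [Nat.descFactorial_eq_factorial_mul_choose] at h1 h2
      calc Z * Dn ^ a ≤ Z * (a.factorial * δ.choose a) := Nat.mul_le_mul_left Z h1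
        _ = a.factorial * (Z * δ.choose a) := by ring
        _ ≤ a.factorial * ((b - 1) * (2 * Z).choose a) := Nat.mul_le_mul_left _ hcount
        _ = (b - 1) * (a.factorial * (2 * Z).choose a) := by ring
        _ ≤ (b - 1) * (2 * Z) ^ a := Nat.mul_le_mul_left _ h2
    have hZR : (0 : ℝ) < (Z : ℝ) := by exact_mod_cast hZ1
    have hcR : (Z : ℝ) * D ^ a ≤ ((b : ℝ) - 1) * (2 * (Z : ℝ)) ^ a := by
      rw [← hB1cast, hDdef]
      exact_mod_cast hnat
    have hreal : D ^ a ≤ (2 * x) ^ a * (Z : ℝ) ^ (a - 1) := by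
      have h2 : ((b : ℝ) - 1) * (2 * (Z : ℝ)) ^ a
          = ((2 * x) ^ a * (Z : ℝ) ^ (a - 1)) * (Z : ℝ) := by
        rw [mul_pow, mul_pow, ← hxa, hpow_split (Z : ℝ)]
        ring
      rw [mul_comm ((Z : ℝ)) (D ^ a), h2] at hcR
      exact le_of_mul_le_mul_right hcR hZR
    have hmain := rpow_helper a ha hD0.le (by positivity : (0 : ℝ) < 2 * x) hZR hreal
    have hbase : (δ : ℝ) / (4 * x) ≤ D / (2 * x) := by
      rw [div_le_div_iff₀ (by positivity) (by positivity)]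
      nlinarith [hx0.le]
    calc (1 / 2 : ℝ) * ((δ : ℝ) / (4 * x)) ^ t
        ≤ ((δ : ℝ) / (4 * x)) ^ t := by
          have := Real.rpow_nonneg (show (0:ℝ) ≤ (δ : ℝ) / (4 * x) by positivity) t
          linarith
      _ ≤ (D / (2 * x)) ^ t := Real.rpow_le_rpow (by positivity) hbase ht0
      _ ≤ (Z : ℝ) := hmain
  · -- few vertices: use the whole graph
    have hn2Z : n ≤ 2 * Z := by omega
    have hcount := counting hfree (Finset.univ : Finset V) (Finset.univ : Finset V)
      (fun u _ => Finset.subset_univ _) (fun u _ => G.minDegree_le_degree u)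
    rw [Finset.card_univ] at hcount
    have hnat : n * Dn ^ a ≤ (b - 1) * n ^ a := by
      have h1 : Dn ^ a ≤ Nat.descFactorial δ a := Nat.pow_sub_le_descFactorial δ a
      have h2 : Nat.descFactorial n a ≤ n ^ a := Nat.descFactorial_le_pow _ _
      rw [Nat.descFactorial_eq_factorial_mul_choose] at h1 h2
      calc n * Dn ^ a ≤ n * (a.factorial * δ.choose a) := Nat.mul_le_mul_left n h1
        _ = a.factorial * (n * δ.choose a) := by ring
        _ ≤ a.factorial * ((b - 1) * n.choose a) := Nat.mul_le_mul_left _ hcount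
        _ = (b - 1) * (a.factorial * n.choose a) := by ring
        _ ≤ (b - 1) * n ^ a := Nat.mul_le_mul_left _ h2
    have hnR : (0 : ℝ) < (n : ℝ) := by exact_mod_cast hn1
    have hcR : (n : ℝ) * D ^ a ≤ ((b : ℝ) - 1) * (n : ℝ) ^ a := by
      rw [← hB1cast, hDdef]
      exact_mod_cast hnat
    have hreal : D ^ a ≤ x ^ a * (n : ℝ) ^ (a - 1) := by
      have h2 : ((b : ℝ) - 1) * (n : ℝ) ^ a = (x ^ a * (n : ℝ) ^ (a - 1)) * (n : ℝ) := by
        rw [← hxa, hpow_split (n : ℝ)]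
        ring
      rw [mul_comm ((n : ℝ)) (D ^ a), h2] at hcR
      exact le_of_mul_le_mul_right hcR hnR
    have hmain := rpow_helper a ha hD0.le hx0 hnR hreal
    have hbase : (δ : ℝ) / (4 * x) ≤ D / x := by
      rw [div_le_div_iff₀ (by positivity) (by positivity)]
      nlinarith [hx0.le]
    have h2Z : (n : ℝ) ≤ 2 * (Z : ℝ) := by exact_mod_cast hn2Z
    have hchain : ((δ : ℝ) / (4 * x)) ^ t ≤ 2 * (Z : ℝ) :=
      le_trans (le_trans (Real.rpow_le_rpow (by positivity) hbase ht0) hmain) h2Z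
    linarith

end ZeroForcing
end

section
/- Let G be an n-vertex graph which contains a k-witness ((s_1,…,s_k),(t_1,…,t_k)) such that the sets {s_1,…,s_k} and {t_1,…,t_k} are disjoint. Then Z(G) ≤ n − k. -/
namespace ZeroForcing

variable {V : Type*}

/-- A `k`-witness in `G`: tuples `s`, `t` with the `s i` pairwise distinct,
`s i` adjacent to `t i`, and `s i` not adjacent to `t j` for `i < j`. -/
def IsWitness {V : Type*} {k : ℕ} (G : SimpleGraph V) (s t : Fin k → V) : Prop :=
  Function.Injective s ∧ (∀ i, G.Adj (s i) (t i)) ∧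
    ∀ i j : Fin k, i < j → ¬ G.Adj (s i) (t j)

/-- **Lemma 1 (second part)**: if `G` has `n` vertices and contains a `k`-witness
`(s, t)` with `{s₁,…,s_k}` and `{t₁,…,t_k}` disjoint, then `Z(G) ≤ n - k`. -/
theorem zeroForcing_of_disjoint_witness {V : Type*} [Fintype V] (G : SimpleGraph V)
    (n k : ℕ) (hn : Fintype.card V = n) (s t : Fin k → V)
    (hw : IsWitness G s t) (hdisj : Disjoint (Set.range s) (Set.range t)) :
    (zeroForcingNumber G : ℤ) ≤ (n : ℤ) - (k : ℤ) := by
  classical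
  obtain ⟨hsinj, hadj, hnadj⟩ := hw
  have htinj : Function.Injective t := by
    intro i j hij
    rcases lt_trichotomy i j with h | h | h
    · exact absurd (hij ▸ hadj i) (hnadj i j h)
    · exact h
    · exact absurd (hij ▸ hadj j) ((hij ▸ hnadj j i h))
  set S : Finset V := Finset.univ \ Finset.image t Finset.univ with hS
  have hmem : ∀ v, v ∉ Set.range t → v ∈ (S : Set V) := by
    intro v hv
    rw [Finset.mem_coe, hS, Finset.mem_sdiff]
    refine ⟨Finset.mem_univ _, ?_⟩
    simp only [Finset.mem_image, Finset.mem_univ, true_and]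
    rintro ⟨j, hj⟩
    exact hv ⟨j, hj⟩
  have hsS : ∀ i, s i ∈ (S : Set V) := fun i =>
    hmem _ (fun hr => hdisj.le_bot ⟨⟨i, rfl⟩, hr⟩)
  have keyAux : ∀ m : ℕ, ∀ i : Fin k, (i : ℕ) < m → Forced G (↑S) (t i) := by
    intro m
    induction m with
    | zero => intro i hi; omega
    | succ m ih =>
      intro i hi
      refine Forced.force (s i) (t i) (Forced.init _ (hsS i)) (hadj i) ?_
      intro x hx hne
      by_cases hxr : x ∈ Set.range t
      · obtain ⟨j, rfl⟩ := hxr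
        have hji : j < i := by
          rcases lt_trichotomy i j with h | h | h
          · exact absurd hx (hnadj i j h)
          · exact absurd (congrArg t h.symm) hne
          · exact h
        exact ih j (by omega)
      · exact Forced.init _ (hmem _ hxr)
  have key : ∀ i : Fin k, Forced G (↑S) (t i) := fun i => keyAux ((i : ℕ) + 1) i (by omega)
  have hzfs : IsZeroForcingSet G (↑S) := by
    intro v
    by_cases hv : v ∈ Set.range t
    · obtain ⟨i, rfl⟩ := hv
      exact key i
    · exact Forced.init _ (hmem _ hv)
  have hcard : S.card = n - k := by
    rw [hS, Finset.card_sdiff_of_subset (Finset.subset_univ _), Finset.card_univ, hn,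
      Finset.card_image_of_injective _ htinj, Finset.card_univ, Fintype.card_fin]
  have hkn : k ≤ n := by
    rw [← hn, ← Fintype.card_fin k]
    exact Fintype.card_le_of_injective t htinj
  have hle : zeroForcingNumber G ≤ n - k :=
    Nat.sInf_le ⟨S, hcard, hzfs⟩
  calc (zeroForcingNumber G : ℤ) ≤ ((n - k : ℕ) : ℤ) := by exact_mod_cast hle
    _ = (n : ℤ) - (k : ℤ) := by omega

end ZeroForcing
end

section
/- For any positive integer k and any a, b ∈ {1,…,k}, one has Φ(a,b)/(k(a+b)) ≤ 1 − √2/2. -/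
namespace ZeroForcing

/-- The number of pairs `(i, j) ∈ A × B` with `i < j`. -/
def pairCount (A B : Finset ℕ) : ℕ := ((A ×ˢ B).filter fun p => p.1 < p.2).card

/-- `Φ(a, b)`: the maximum of `|{(i,j) ∈ A × B : i < j}|` over subsets
`A, B ⊆ [k] = {1,…,k}` with `|A| = a` and `|B| = b`. -/
noncomputable def Phi (k a b : ℕ) : ℕ :=
  sSup {c | ∃ A B : Finset ℕ, A ⊆ Finset.Icc 1 k ∧ B ⊆ Finset.Icc 1 k ∧
    A.card = a ∧ B.card = b ∧ c = pairCount A B}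

section
open Finset

lemma gauss (t : ℕ) : 2 * ∑ m ∈ Icc 1 t, (t + 1 - m) = t * (t + 1) := by
  induction t with
  | zero => simp
  | succ t ih =>
    rw [← Finset.insert_Icc_right_eq_Icc_add_one (by omega), Finset.sum_insert (by simp)]
    have h2 : ∑ m ∈ Icc 1 t, (t + 1 + 1 - m) = (∑ m ∈ Icc 1 t, (t + 1 - m)) + t := by
      have : ∀ m ∈ Icc 1 t, t + 1 + 1 - m = (t + 1 - m) + 1 := by
        intro m hm; simp only [mem_Icc] at hm; omega
      rw [Finset.sum_congr rfl this, Finset.sum_add_distrib, Finset.sum_const,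
        Nat.card_Icc]
      simp
    rw [h2]
    have h3 : t + 1 + 1 - (t + 1) = 1 := by omega
    rw [h3]
    nlinarith [ih]

/-- Key combinatorial bound. -/
lemma key (k a b : ℕ) (A B : Finset ℕ) (hA : A ⊆ Icc 1 k) (hB : B ⊆ Icc 1 k)
    (hca : A.card = a) (hcb : B.card = b) :
    2 * pairCount A B + (a + b - k) * (a + b - k + 1) ≤ 2 * (a * b) := by
  set t := a + b - k with ht
  clear_value t
  have hbk : b ≤ k := by
    have := Finset.card_le_card hB; rwa [hcb, Nat.card_Icc, Nat.add_sub_cancel] at this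
  have hak : a ≤ k := by
    have := Finset.card_le_card hA; rwa [hca, Nat.card_Icc, Nat.add_sub_cancel] at this
  -- split of A × B
  have hsplit : pairCount A B
      + ((A ×ˢ B).filter fun p => ¬ p.1 < p.2).card = a * b := by
    rw [pairCount, Finset.card_filter_add_card_filter_not, card_product, hca, hcb]
  -- ge count as a sum over B
  have hgesum : ((A ×ˢ B).filter fun p => ¬ p.1 < p.2).card
      = ∑ j ∈ B, (A.filter fun i => j ≤ i).card := by
    rw [Finset.card_filter, Finset.sum_product_right]
    refine Finset.sum_congr rfl fun j _ => ?_
    rw [Finset.card_filter]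
    refine Finset.sum_congr rfl fun i _ => ?_
    simp [not_lt]
  -- termwise lower bound
  have hterm : ∀ j ∈ B, ((Icc 1 t).filter fun m => m + j ≤ a + 1).card
      ≤ (A.filter fun i => j ≤ i).card := by
    intro j hj
    have hj1 : 1 ≤ j ∧ j ≤ k := by simpa [mem_Icc] using hB hj
    have h1 : ((Icc 1 t).filter fun m => m + j ≤ a + 1).card ≤ a + 1 - j := by
      have hsub : ((Icc 1 t).filter fun m => m + j ≤ a + 1) ⊆ Icc 1 (a + 1 - j) := by
        intro m hm
        simp only [mem_filter, mem_Icc] at hm ⊢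
        omega
      calc ((Icc 1 t).filter fun m => m + j ≤ a + 1).card ≤ (Icc 1 (a+1-j)).card :=
            Finset.card_le_card hsub
        _ = a + 1 - j := by rw [Nat.card_Icc]; omega
    have h2 : (A.filter fun i => ¬ j ≤ i).card ≤ j - 1 := by
      have hsub : (A.filter fun i => ¬ j ≤ i) ⊆ Icc 1 (j - 1) := by
        intro i hi
        simp only [mem_filter, not_le] at hi
        have := hA hi.1
        simp only [mem_Icc] at this ⊢
        omega
      calc (A.filter fun i => ¬ j ≤ i).card ≤ (Icc 1 (j-1)).card := Finset.card_le_card hsub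
        _ = j - 1 := by rw [Nat.card_Icc]; omega
    have h3 : (A.filter fun i => j ≤ i).card + (A.filter fun i => ¬ j ≤ i).card = a := by
      rw [Finset.card_filter_add_card_filter_not, hca]
    omega
  -- swap the double sum
  have hswap : ∑ j ∈ B, ((Icc 1 t).filter fun m => m + j ≤ a + 1).card
      = ∑ m ∈ Icc 1 t, (B.filter fun j => m + j ≤ a + 1).card := by
    simp only [Finset.card_filter]
    rw [Finset.sum_comm]
  -- per m lower bound
  have hm : ∀ m ∈ Icc 1 t, t + 1 - m ≤ (B.filter fun j => m + j ≤ a + 1).card := by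
    intro m hmem
    simp only [mem_Icc] at hmem
    have h2 : (B.filter fun j => ¬ m + j ≤ a + 1).card ≤ k + 1 - (a + 2 - m) := by
      have hsub : (B.filter fun j => ¬ m + j ≤ a + 1) ⊆ Icc (a + 2 - m) k := by
        intro j hj
        simp only [mem_filter, not_le] at hj
        have := hB hj.1
        simp only [mem_Icc] at this ⊢
        omega
      calc _ ≤ (Icc (a + 2 - m) k).card := Finset.card_le_card hsub
        _ = k + 1 - (a + 2 - m) := by rw [Nat.card_Icc]
    have h3 : (B.filter fun j => m + j ≤ a + 1).card
        + (B.filter fun j => ¬ m + j ≤ a + 1).card = b := by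
      rw [Finset.card_filter_add_card_filter_not, hcb]
    omega
  -- assemble
  have hge : ∑ m ∈ Icc 1 t, (t + 1 - m) ≤ ((A ×ˢ B).filter fun p => ¬ p.1 < p.2).card := by
    rw [hgesum]
    calc ∑ m ∈ Icc 1 t, (t + 1 - m)
        ≤ ∑ m ∈ Icc 1 t, (B.filter fun j => m + j ≤ a + 1).card := Finset.sum_le_sum hm
      _ = ∑ j ∈ B, ((Icc 1 t).filter fun m => m + j ≤ a + 1).card := hswap.symm
      _ ≤ _ := Finset.sum_le_sum hterm
  have hg := gauss t
  omega

lemma phi_key (k a b : ℕ) (ha1 : 1 ≤ a) (hak : a ≤ k) (hb1 : 1 ≤ b) (hbk : b ≤ k) :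
    2 * Phi k a b + (a + b - k) * (a + b - k + 1) ≤ 2 * (a * b) := by
  have hne : {c | ∃ A B : Finset ℕ, A ⊆ Finset.Icc 1 k ∧ B ⊆ Finset.Icc 1 k ∧
      A.card = a ∧ B.card = b ∧ c = pairCount A B}.Nonempty := by
    refine ⟨pairCount (Icc 1 a) (Icc 1 b), Icc 1 a, Icc 1 b, ?_, ?_, ?_, ?_, rfl⟩
    · exact Finset.Icc_subset_Icc le_rfl hak
    · exact Finset.Icc_subset_Icc le_rfl hbk
    · rw [Nat.card_Icc]; omega
    · rw [Nat.card_Icc]; omega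
  have hbdd : BddAbove {c | ∃ A B : Finset ℕ, A ⊆ Finset.Icc 1 k ∧ B ⊆ Finset.Icc 1 k ∧
      A.card = a ∧ B.card = b ∧ c = pairCount A B} := by
    refine ⟨a * b, fun c hc => ?_⟩
    obtain ⟨A, B, _, _, hca, hcb, rfl⟩ := hc
    calc pairCount A B ≤ (A ×ˢ B).card := Finset.card_filter_le _ _
      _ = a * b := by rw [card_product, hca, hcb]
  have hmem := Nat.sSup_mem hne hbdd
  obtain ⟨A, B, hA, hB, hca, hcb, heq⟩ := hmem
  rw [Phi, heq]
  exact key k a b A B hA hB hca hcb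

end

/-- **Lemma 4**: for `a, b ∈ [k]`, `Φ(a,b)/(k(a+b)) ≤ 1 - √2/2`. -/
theorem phi_density_le (k a b : ℕ) (hk : 0 < k)
    (ha : a ∈ Finset.Icc 1 k) (hb : b ∈ Finset.Icc 1 k) :
    (Phi k a b : ℝ) / (k * (a + b)) ≤ 1 - Real.sqrt 2 / 2 := by
  simp only [Finset.mem_Icc] at ha hb
  obtain ⟨ha1, hak⟩ := ha
  obtain ⟨hb1, hbk⟩ := hb
  have hnat := phi_key k a b ha1 hak hb1 hbk
  have hks : (0:ℝ) < (k:ℝ) * ((a:ℝ) + (b:ℝ)) := by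
    have : (1:ℝ) ≤ (k:ℝ) := by exact_mod_cast hk
    have h1 : (1:ℝ) ≤ (a:ℝ) := by exact_mod_cast ha1
    have h2 : (1:ℝ) ≤ (b:ℝ) := by exact_mod_cast hb1
    nlinarith
  rw [div_le_iff₀ hks]
  have hs2 : Real.sqrt 2 ^ 2 = 2 := Real.sq_sqrt (by norm_num)
  have hs0 : (0:ℝ) ≤ Real.sqrt 2 := Real.sqrt_nonneg 2
  by_cases hcase : k ≤ a + b
  · have htr : ((a + b - k : ℕ) : ℝ) = (a:ℝ) + (b:ℝ) - (k:ℝ) := by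
      push_cast [Nat.cast_sub hcase]; ring
    have hR : 2 * (Phi k a b : ℝ) + ((a:ℝ) + b - k) * ((a:ℝ) + b - k + 1)
        ≤ 2 * ((a:ℝ) * b) := by
      have := hnat
      have h' : ((2 * Phi k a b + (a + b - k) * (a + b - k + 1) : ℕ) : ℝ)
          ≤ ((2 * (a * b) : ℕ) : ℝ) := by exact_mod_cast this
      push_cast [htr] at h'
      exact h'
    have hk0 : (0:ℝ) ≤ (a:ℝ) + b - k := by
      have : (k:ℝ) ≤ (a:ℝ) + b := by exact_mod_cast hcase
      linarith
    have hqk : (Real.sqrt 2 * (k:ℝ)) ^ 2 = 2 * (k:ℝ) ^ 2 := by rw [mul_pow, hs2]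
    nlinarith [sq_nonneg ((a:ℝ) - b), sq_nonneg ((a:ℝ) + b - Real.sqrt 2 * k), hR, hk0, hqk]
  · push_neg at hcase
    have hR : (Phi k a b : ℝ) ≤ (a:ℝ) * b := by
      have : Phi k a b ≤ a * b := by omega
      exact_mod_cast this
    have hsk : (a:ℝ) + b ≤ (k:ℝ) := by
      have : a + b ≤ k := by omega
      exact_mod_cast this
    have hq32 : Real.sqrt 2 ≤ 3/2 := by nlinarith [hs2, hs0]
    nlinarith [sq_nonneg ((a:ℝ) - b), hR, hsk, hq32, hks]


end ZeroForcing
end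

section
/- Let k be a positive integer and let A, B ⊆ [k] with |A| = a, |B| = b and |A ∩ B| = g. Then |{(i,j) ∈ A × B : i < j}| ≤ ab − g(g+1)/2. Consequently, Φ(a,b) ≤ ab − (a+b−k+1)(a+b−k)/2 whenever a + b ≥ k. -/
namespace ZeroForcing

lemma twice_geCount (S : Finset ℕ) :
    2 * ((S ×ˢ S).filter fun p => p.2 ≤ p.1).card = S.card * (S.card + 1) := by
  induction S using Finset.induction_on_max with
  | empty => simp
  | insert a S ha ih =>
    have hS : a ∉ S := fun h => lt_irrefl a (ha a h)
    have hset : ((insert a S ×ˢ insert a S).filter fun p => p.2 ≤ p.1)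
        = ({a} ×ˢ insert a S) ∪ ((S ×ˢ S).filter fun p => p.2 ≤ p.1) := by
      ext ⟨i, j⟩
      simp only [Finset.mem_filter, Finset.mem_product, Finset.mem_union,
        Finset.mem_insert, Finset.mem_singleton]
      constructor
      · rintro ⟨⟨hi, hj⟩, hji⟩
        rcases hi with rfl | hi
        · left; exact ⟨rfl, hj⟩
        · right
          rcases hj with rfl | hj
          · exact absurd hji (not_le.2 (ha i hi))
          · exact ⟨⟨hi, hj⟩, hji⟩
      · rintro (⟨rfl, hj⟩ | ⟨⟨hi, hj⟩, hji⟩)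
        · refine ⟨⟨Or.inl rfl, hj⟩, ?_⟩
          rcases hj with rfl | hj
          · exact le_refl _
          · exact (ha j hj).le
        · exact ⟨⟨Or.inr hi, Or.inr hj⟩, hji⟩
    have hdisj : Disjoint ({a} ×ˢ insert a S) ((S ×ˢ S).filter fun p => p.2 ≤ p.1) := by
      rw [Finset.disjoint_left]
      rintro ⟨i, j⟩ hp hq
      have h1 := (Finset.mem_product.1 hp).1
      have h2 := (Finset.mem_product.1 (Finset.mem_filter.1 hq).1).1
      simp only [Finset.mem_singleton] at h1
      exact hS (h1 ▸ h2)
    rw [hset, Finset.card_union_of_disjoint hdisj, Finset.card_product,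
      Finset.card_singleton, Finset.card_insert_of_notMem hS]
    ring_nf
    ring_nf at ih
    omega

lemma pairCount_le (A B : Finset ℕ) :
    2 * pairCount A B + (A ∩ B).card * ((A ∩ B).card + 1) ≤ 2 * (A.card * B.card) := by
  set G := A ∩ B with hG
  have hsub : ((A ×ˢ B).filter fun p => p.1 < p.2) ∪ ((G ×ˢ G).filter fun p => p.2 ≤ p.1)
      ⊆ A ×ˢ B := by
    intro p hp
    rcases Finset.mem_union.1 hp with h | h
    · exact (Finset.mem_filter.1 h).1
    · have hm := (Finset.mem_filter.1 h).1
      have h1 := (Finset.mem_product.1 hm).1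
      have h2 := (Finset.mem_product.1 hm).2
      exact Finset.mem_product.2 ⟨(Finset.mem_inter.1 h1).1, (Finset.mem_inter.1 h2).2⟩
  have hdisj : Disjoint ((A ×ˢ B).filter fun p => p.1 < p.2)
      ((G ×ˢ G).filter fun p => p.2 ≤ p.1) := by
    rw [Finset.disjoint_left]
    intro p hp hq
    have h1 := (Finset.mem_filter.1 hp).2
    have h2 := (Finset.mem_filter.1 hq).2
    omega
  have hcard := Finset.card_le_card hsub
  rw [Finset.card_union_of_disjoint hdisj, Finset.card_product] at hcard
  have h2 := twice_geCount G
  unfold pairCount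
  omega

lemma pairCount_le_int (A B : Finset ℕ) (a b g : ℕ)
    (ha : A.card = a) (hb : B.card = b) (hg : (A ∩ B).card = g) :
    (pairCount A B : ℤ) ≤ (a : ℤ) * b - g * (g + 1) / 2 := by
  have h := pairCount_le A B
  rw [ha, hb, hg] at h
  have hz : 2 * (pairCount A B : ℤ) + (g : ℤ) * ((g : ℤ) + 1) ≤ 2 * ((a : ℤ) * b) := by
    exact_mod_cast h
  obtain ⟨m, hm⟩ : ∃ m : ℤ, (g : ℤ) * ((g : ℤ) + 1) = m := ⟨_, rfl⟩
  obtain ⟨n, hn⟩ : ∃ n : ℤ, (a : ℤ) * b = n := ⟨_, rfl⟩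
  rw [hm, hn] at hz ⊢
  omega

lemma tri_mono {x y : ℤ} (hx : 0 ≤ x) (hxy : x ≤ y) : (x + 1) * x / 2 ≤ (y + 1) * y / 2 :=
  Int.ediv_le_ediv (by norm_num) (by nlinarith)

lemma inter_card_ge (k : ℕ) (A B : Finset ℕ)
    (hA : A ⊆ Finset.Icc 1 k) (hB : B ⊆ Finset.Icc 1 k) :
    (A.card : ℤ) + B.card - k ≤ ((A ∩ B).card : ℤ) := by
  have hu : (A ∪ B).card ≤ k := by
    have := Finset.card_le_card (Finset.union_subset hA hB)
    simpa using this
  have := Finset.card_union_add_card_inter A B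
  omega

/-- For `A, B ⊆ [k]` with `|A| = a`, `|B| = b`, `|A ∩ B| = g`, the number of pairs
`(i,j) ∈ A × B` with `i < j` is at most `ab - g(g+1)/2`; consequently, if `a + b ≥ k`
then `Φ(a,b) ≤ ab - (a+b-k+1)(a+b-k)/2`. -/
theorem pairCount_le_and_phi_le (k : ℕ) (hk : 0 < k) (A B : Finset ℕ)
    (hA : A ⊆ Finset.Icc 1 k) (hB : B ⊆ Finset.Icc 1 k)
    (a b g : ℕ) (ha : A.card = a) (hb : B.card = b) (hg : (A ∩ B).card = g) :
    (pairCount A B : ℤ) ≤ (a : ℤ) * b - g * (g + 1) / 2 ∧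
      (k ≤ a + b →
        (Phi k a b : ℤ) ≤ (a : ℤ) * b - ((a : ℤ) + b - k + 1) * ((a : ℤ) + b - k) / 2) := by
  refine ⟨pairCount_le_int A B a b g ha hb hg, fun hab => ?_⟩
  set Z : ℤ := (a : ℤ) * b - ((a : ℤ) + b - k + 1) * ((a : ℤ) + b - k) / 2 with hZ
  have h0 : (0:ℤ) ≤ (a : ℤ) + b - k := by
    have : (k:ℤ) ≤ (a:ℤ) + b := by exact_mod_cast hab
    omega
  have hbound : ∀ A' B' : Finset ℕ, A' ⊆ Finset.Icc 1 k → B' ⊆ Finset.Icc 1 k →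
      A'.card = a → B'.card = b → (pairCount A' B' : ℤ) ≤ Z := by
    intro A' B' hA' hB' ha' hb'
    have h1 := pairCount_le_int A' B' a b (A' ∩ B').card ha' hb' rfl
    have h2 := inter_card_ge k A' B' hA' hB'
    rw [ha', hb'] at h2
    have h3 := tri_mono h0 h2
    have h4 : (((A' ∩ B').card : ℤ) + 1) * ((A' ∩ B').card : ℤ) / 2
        = ((A' ∩ B').card : ℤ) * (((A' ∩ B').card : ℤ) + 1) / 2 := by ring_nf
    rw [hZ]
    omega
  have hZ0 : 0 ≤ Z := le_trans (by positivity) (hbound A B hA hB ha hb)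
  have hle : Phi k a b ≤ Z.toNat := by
    apply csSup_le
    · exact ⟨pairCount A B, A, B, hA, hB, ha, hb, rfl⟩
    · rintro c ⟨A', B', hA', hB', ha', hb', rfl⟩
      exact (Int.le_toNat hZ0).2 (hbound A' B' hA' hB' ha' hb')
  calc (Phi k a b : ℤ) ≤ (Z.toNat : ℤ) := by exact_mod_cast hle
    _ = Z := Int.toNat_of_nonneg hZ0

end ZeroForcing
end

section
/- Let G be an (n,d,λ)-graph. Then for any two vertex subsets U, W of G, |d|U||W|/n − e(U,W)| ≤ λ · √(|U||W|(1 − |U|/n)(1 − |W|/n)). -/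
namespace ZeroForcing

/-- The adjacency matrix of a graph over `ℝ` is Hermitian. -/
lemma adjMatrix_isHermitian {V : Type*} [Fintype V] (G : SimpleGraph V)
    [DecidableRel G.Adj] : (G.adjMatrix ℝ).IsHermitian := by
  rw [Matrix.IsHermitian, Matrix.conjTranspose_eq_transpose_of_trivial]
  exact G.isSymm_adjMatrix

open scoped Classical in
/-- The eigenvalues of the adjacency matrix of `G`. -/
noncomputable def adjEigenvalues {n : ℕ} (G : SimpleGraph (Fin n)) : Fin n → ℝ :=
  (adjMatrix_isHermitian G).eigenvalues

/-- The smallest adjacency-matrix eigenvalue of `G`. -/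
noncomputable def lambdaMin {n : ℕ} (G : SimpleGraph (Fin n)) : ℝ :=
  ⨅ i, adjEigenvalues G i

open scoped Classical in
/-- An `(n, d, λ)`-graph: a `d`-regular graph on `n` vertices all of whose
adjacency eigenvalues except the largest one (which equals `d`) are at most `lam`
in absolute value. -/
def IsNDLGraph {n : ℕ} (G : SimpleGraph (Fin n)) (d : ℕ) (lam : ℝ) : Prop :=
  G.IsRegularOfDegree d ∧
    ∃ i₀ : Fin n, adjEigenvalues G i₀ = d ∧ ∀ i : Fin n, i ≠ i₀ → |adjEigenvalues G i| ≤ lam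

open scoped Classical in
/-- `e(U, W)`: the number of edges with one endpoint in `U` and the other in `W`,
where edges with both endpoints in `U ∩ W` are counted twice. -/
noncomputable def edgeCountBetween {n : ℕ} (G : SimpleGraph (Fin n))
    (U W : Finset (Fin n)) : ℕ :=
  ((U ×ˢ W).filter fun p => G.Adj p.1 p.2).card


open scoped RealInnerProductSpace Matrix

variable {n : ℕ}

noncomputable def vec {n : ℕ} (f : Fin n → ℝ) : EuclideanSpace ℝ (Fin n) :=
  (WithLp.equiv 2 (Fin n → ℝ)).symm f

lemma inner_vec (f g : Fin n → ℝ) : ⟪vec f, vec g⟫ = ∑ i, f i * g i := by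
  simp [vec, PiLp.inner_apply, RCLike.inner_apply]
  exact Finset.sum_congr rfl fun i _ => mul_comm _ _

lemma vec_sub_smul (f g : Fin n → ℝ) (c : ℝ) :
    vec f - c • vec g = vec (fun v => f v - c * g v) := rfl

lemma toEuclideanLin_vec (A : Matrix (Fin n) (Fin n) ℝ) (f : Fin n → ℝ) :
    A.toEuclideanLin (vec f) = vec (A *ᵥ f) := rfl

open scoped Classical in
lemma adj_ones (G : SimpleGraph (Fin n)) {d : ℕ} (hreg : G.IsRegularOfDegree d) :
    (G.adjMatrix ℝ).toEuclideanLin (vec fun _ => 1) = (d : ℝ) • (vec fun _ => 1) := by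
  rw [toEuclideanLin_vec]
  have h1 : (G.adjMatrix ℝ) *ᵥ (fun _ => (1:ℝ)) = fun _ => (d : ℝ) := by
    funext v
    rw [SimpleGraph.adjMatrix_mulVec_apply]
    simp [hreg v]
  rw [h1]
  have h2 : (d : ℝ) • (vec (n := n) fun _ => 1) = vec fun _ => (d:ℝ) • (1:ℝ) := rfl
  rw [h2]
  norm_num

open scoped Classical in
lemma symm_swap (G : SimpleGraph (Fin n)) (x y : EuclideanSpace ℝ (Fin n)) :
    ⟪x, (G.adjMatrix ℝ).toEuclideanLin y⟫ = ⟪(G.adjMatrix ℝ).toEuclideanLin x, y⟫ := by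
  have hS := Matrix.isHermitian_iff_isSymmetric.1 (adjMatrix_isHermitian G)
  exact (hS x y).symm

open scoped Classical in
lemma eigen_apply (A : Matrix (Fin n) (Fin n) ℝ) (hA : A.IsHermitian) (j : Fin n) :
    A.toEuclideanLin (hA.eigenvectorBasis j) = hA.eigenvalues j • hA.eigenvectorBasis j := by
  simp only [Matrix.toEuclideanLin_apply]
  rw [show (hA.eigenvectorBasis j).ofLp = ⇑(hA.eigenvectorBasis j) from rfl,
    hA.mulVec_eigenvectorBasis j]
  rfl

lemma inner_toEuclideanLin (A : Matrix (Fin n) (Fin n) ℝ) (hA : A.IsHermitian)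
    (x y : EuclideanSpace ℝ (Fin n)) :
    ⟪x, A.toEuclideanLin y⟫ = ∑ j, hA.eigenvalues j *
      (⟪hA.eigenvectorBasis j, x⟫ * ⟪hA.eigenvectorBasis j, y⟫) := by
  conv_lhs => rw [← hA.eigenvectorBasis.sum_repr' y]
  rw [map_sum, inner_sum]
  refine Finset.sum_congr rfl fun j _ => ?_
  rw [map_smul, eigen_apply A hA j, real_inner_smul_right, real_inner_smul_right,
    real_inner_comm x]
  ring

lemma parseval (b : OrthonormalBasis (Fin n) ℝ (EuclideanSpace ℝ (Fin n)))
    (x : EuclideanSpace ℝ (Fin n)) : ∑ j, ⟪b j, x⟫ ^ 2 = ‖x‖ ^ 2 := by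
  have h := b.sum_inner_mul_inner x x
  rw [real_inner_self_eq_norm_sq] at h
  rw [← h]
  refine Finset.sum_congr rfl fun j _ => ?_
  rw [real_inner_comm x (b j)]; ring

lemma sum_abs_mul_le (a b : Fin n → ℝ) :
    ∑ j, |a j| * |b j| ≤ Real.sqrt (∑ j, a j ^ 2) * Real.sqrt (∑ j, b j ^ 2) := by
  have h := Finset.sum_mul_sq_le_sq_mul_sq Finset.univ (fun j => |a j|) (fun j => |b j|)
  simp only [sq_abs] at h
  calc ∑ j, |a j| * |b j| ≤ Real.sqrt ((∑ j, a j ^ 2) * ∑ j, b j ^ 2) := by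
        rw [Real.le_sqrt (Finset.sum_nonneg fun j _ => mul_nonneg (abs_nonneg _) (abs_nonneg _))]
        · exact h
        · positivity
    _ = _ := Real.sqrt_mul (Finset.sum_nonneg fun j _ => sq_nonneg _) _

open scoped Classical in
lemma spectral_bound (G : SimpleGraph (Fin n)) (d : ℕ) (lam : ℝ)
    (h : IsNDLGraph G d lam) (hn : 0 < n) (hlam : 0 ≤ lam)
    (x y : EuclideanSpace ℝ (Fin n)) (hx : ⟪vec fun _ => 1, x⟫ = 0) :
    |⟪x, (G.adjMatrix ℝ).toEuclideanLin y⟫| ≤ lam * (‖x‖ * ‖y‖) := by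
  obtain ⟨hreg, i₀, hi₀, hball⟩ := h
  have hA := adjMatrix_isHermitian G
  set B := hA.eigenvectorBasis with hB
  set μ := hA.eigenvalues with hμ
  have hμ_eq : μ = adjEigenvalues G := rfl
  set a : Fin n → ℝ := fun j => ⟪B j, x⟫ with ha
  set b : Fin n → ℝ := fun j => ⟪B j, y⟫ with hbdef
  have key : ∀ j, |μ j * (a j * b j)| ≤ lam * (|a j| * |b j|) := by
    intro j
    have hcalc : ∀ j, |μ j| ≤ lam → |μ j * (a j * b j)| ≤ lam * (|a j| * |b j|) := by
      intro j hle
      calc |μ j * (a j * b j)| = |μ j| * (|a j| * |b j|) := by rw [abs_mul, abs_mul]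
        _ ≤ lam * (|a j| * |b j|) :=
            mul_le_mul_of_nonneg_right hle (by positivity)
    by_cases hj : j = i₀
    · subst hj
      by_cases hd : (d : ℝ) ≤ lam
      · refine hcalc j ?_
        rw [hμ_eq, hi₀, abs_of_nonneg (by positivity)]
        exact hd
      · -- the coefficient of x on the top eigenvector vanishes
        push_neg at hd
        set c : Fin n → ℝ := fun i => ⟪B i, vec fun _ => 1⟫ with hc
        have hLone := adj_ones G hreg
        have hcj : ∀ i, i ≠ j → c i = 0 := by
          intro i hi
          have w1 : ⟪B i, (G.adjMatrix ℝ).toEuclideanLin (vec fun _ => 1)⟫ = (d : ℝ) * c i := by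
            rw [hLone, real_inner_smul_right]
          have w2 : ⟪B i, (G.adjMatrix ℝ).toEuclideanLin (vec fun _ => 1)⟫ = μ i * c i := by
            rw [symm_swap, eigen_apply _ hA i, real_inner_smul_left]
          have hne : μ i ≠ (d : ℝ) := by
            intro hcon
            have := hball i hi
            rw [hμ_eq] at hcon
            rw [hcon] at this
            have : (d : ℝ) ≤ lam := le_trans (le_abs_self _) this
            exact absurd this (not_le.2 hd)
          have : (μ i - (d : ℝ)) * c i = 0 := by linear_combination w1 - w2
          rcases mul_eq_zero.1 this with h' | h'
          · exact absurd (sub_eq_zero.1 h') hne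
          · exact h'
        have hsum := B.sum_inner_mul_inner (vec (n := n) fun _ => 1) x
        rw [hx] at hsum
        have hsum2 : c j * a j = 0 := by
          have he : ∀ i, inner ℝ (vec (n := n) fun _ => (1:ℝ)) (B i) * inner ℝ (B i) x = c i * a i := by
            intro i
            rw [real_inner_comm (B i) (vec fun _ => (1:ℝ))]
          rw [Finset.sum_congr rfl (fun i _ => he i)] at hsum
          rw [← hsum]
          refine (Finset.sum_eq_single (f := fun i => c i * a i) j ?_ ?_).symm
          · intro i _ hi
            show c i * a i = 0
            rw [hcj i hi, zero_mul]
          · intro hmem; exact absurd (Finset.mem_univ j) hmem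
        have hcj0 : c j ≠ 0 := by
          have hnorm : ∑ i, c i ^ 2 = (n : ℝ) := by
            rw [hc, parseval B, ← real_inner_self_eq_norm_sq, inner_vec]
            simp
          have : ∑ i, c i ^ 2 = c j ^ 2 := by
            rw [Finset.sum_eq_single j]
            · intro i _ hi; rw [hcj i hi]; ring
            · intro hmem; exact absurd (Finset.mem_univ j) hmem
          intro h0
          rw [this, h0] at hnorm
          have : (0:ℝ) < n := by exact_mod_cast hn
          simp at hnorm
          linarith
        have ha0 : a j = 0 := by
          rcases mul_eq_zero.1 hsum2 with h' | h'
          · exact absurd h' hcj0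
          · exact h'
        rw [ha0]
        simp [mul_nonneg hlam (abs_nonneg _)]
    · exact hcalc j (by rw [hμ_eq]; exact hball j hj)
  rw [inner_toEuclideanLin _ hA x y]
  have hxnorm : Real.sqrt (∑ j, a j ^ 2) = ‖x‖ := by
    rw [ha]; rw [parseval B x, Real.sqrt_sq (norm_nonneg _)]
  have hynorm : Real.sqrt (∑ j, b j ^ 2) = ‖y‖ := by
    rw [hbdef]; rw [parseval B y, Real.sqrt_sq (norm_nonneg _)]
  calc |∑ j, μ j * (a j * b j)| ≤ ∑ j, |μ j * (a j * b j)| := Finset.abs_sum_le_sum_abs _ _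
    _ ≤ ∑ j, lam * (|a j| * |b j|) := Finset.sum_le_sum fun j _ => key j
    _ = lam * ∑ j, |a j| * |b j| := by rw [Finset.mul_sum]
    _ ≤ lam * (Real.sqrt (∑ j, a j ^ 2) * Real.sqrt (∑ j, b j ^ 2)) :=
        mul_le_mul_of_nonneg_left (sum_abs_mul_le a b) hlam
    _ = lam * (‖x‖ * ‖y‖) := by rw [hxnorm, hynorm]

open scoped Classical in
lemma inner_ind_ones (U : Finset (Fin n)) :
    ⟪vec (fun v => if v ∈ U then (1:ℝ) else 0), vec (n := n) fun _ => 1⟫ = U.card := by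
  rw [inner_vec]; simp

open scoped Classical in
lemma inner_ones_ones : ⟪vec (n := n) fun _ => 1, vec fun _ => 1⟫ = (n : ℝ) := by
  rw [inner_vec]; simp

open scoped Classical in
lemma edgeCount_eq (G : SimpleGraph (Fin n)) (U W : Finset (Fin n)) :
    ⟪vec (fun v => if v ∈ U then (1:ℝ) else 0),
      (G.adjMatrix ℝ).toEuclideanLin (vec (fun v => if v ∈ W then (1:ℝ) else 0))⟫
      = (edgeCountBetween G U W : ℝ) := by
  rw [toEuclideanLin_vec, inner_vec]
  have hmv : ∀ v, (G.adjMatrix ℝ *ᵥ fun w => if w ∈ W then (1:ℝ) else 0) v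
      = ∑ w, (G.adjMatrix ℝ) v w * (if w ∈ W then (1:ℝ) else 0) := fun v => rfl
  have step2 : ∀ v, ∑ w, (G.adjMatrix ℝ) v w * (if w ∈ W then (1:ℝ) else 0)
      = ∑ w ∈ W, (G.adjMatrix ℝ) v w := by
    intro v
    rw [Finset.sum_congr rfl fun w _ => by rw [mul_ite, mul_one, mul_zero],
      Finset.sum_ite_mem, Finset.univ_inter]
  have step1 : ∑ v, (if v ∈ U then (1:ℝ) else 0) *
        (G.adjMatrix ℝ *ᵥ fun w => if w ∈ W then (1:ℝ) else 0) v
      = ∑ v ∈ U, ∑ w ∈ W, (G.adjMatrix ℝ) v w := by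
    rw [Finset.sum_congr rfl fun v _ => by
      rw [ite_mul, one_mul, zero_mul, hmv v, step2 v],
      Finset.sum_ite_mem, Finset.univ_inter]
  rw [step1]
  have he : (edgeCountBetween G U W : ℝ) = ∑ v ∈ U, ∑ w ∈ W, (G.adjMatrix ℝ) v w := by
    unfold edgeCountBetween
    rw [Finset.natCast_card_filter, Finset.sum_product]
    exact Finset.sum_congr rfl fun v _ => Finset.sum_congr rfl fun w _ => by
      rw [SimpleGraph.adjMatrix_apply]
  rw [he]

open scoped Classical in
lemma norm_sq_indicator (U : Finset (Fin n)) (hn : 0 < n) :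
    ‖vec (fun v => if v ∈ U then (1:ℝ) else 0) - ((U.card : ℝ)/n) • vec (fun _ => 1)‖ ^ 2
      = U.card * (1 - U.card / n) := by
  have hle : U.card ≤ n := by simpa using Finset.card_le_univ U
  have hn' : (n:ℝ) ≠ 0 := Nat.cast_ne_zero.2 hn.ne'
  rw [← real_inner_self_eq_norm_sq, vec_sub_smul, inner_vec]
  have hstep : ∀ v : Fin n, ((if v ∈ U then (1:ℝ) else 0) - (U.card:ℝ)/n * 1) *
      ((if v ∈ U then (1:ℝ) else 0) - (U.card:ℝ)/n * 1)
      = (if v ∈ U then (1 - (U.card:ℝ)/n)^2 else ((U.card:ℝ)/n)^2) := by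
    intro v; by_cases hv : v ∈ U <;> simp [hv] <;> ring
  rw [Finset.sum_congr rfl fun v _ => hstep v, Finset.sum_ite, Finset.sum_const,
    Finset.sum_const]
  have h1 : (Finset.univ.filter (· ∈ U)) = U := by ext v; simp
  have h2 : (Finset.univ.filter (fun v => ¬ v ∈ U)) = Uᶜ := by ext v; simp
  rw [h1, h2, Finset.card_compl, Fintype.card_fin, nsmul_eq_mul, nsmul_eq_mul,
    Nat.cast_sub hle]
  field_simp
  ring

open scoped Classical in
lemma main_identity (G : SimpleGraph (Fin n)) {d : ℕ} (hreg : G.IsRegularOfDegree d)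
    (U W : Finset (Fin n)) (hn : 0 < n) :
    ⟪vec (fun v => if v ∈ U then (1:ℝ) else 0) - ((U.card:ℝ)/n) • vec (fun _ => 1),
      (G.adjMatrix ℝ).toEuclideanLin
        (vec (fun v => if v ∈ W then (1:ℝ) else 0) - ((W.card:ℝ)/n) • vec (fun _ => 1))⟫
      = (edgeCountBetween G U W : ℝ) - d * U.card * W.card / n := by
  have hn' : (n:ℝ) ≠ 0 := Nat.cast_ne_zero.2 hn.ne'
  have h1W : ⟪vec (n := n) (fun _ => 1),
      (G.adjMatrix ℝ).toEuclideanLin (vec (fun v => if v ∈ W then (1:ℝ) else 0))⟫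
      = d * W.card := by
    rw [symm_swap, adj_ones G hreg, real_inner_smul_left, inner_vec]
    simp
  rw [map_sub, map_smul, adj_ones G hreg, smul_smul, inner_sub_left, inner_sub_right,
    inner_sub_right, real_inner_smul_left, real_inner_smul_left, real_inner_smul_right,
    real_inner_smul_right, edgeCount_eq G U W, inner_ones_ones, inner_ind_ones, h1W]
  field_simp
  ring

/-- **Theorem 5(ii)**: for an `(n,d,λ)`-graph `G` and any vertex subsets `U`, `W`,
`|d|U||W|/n - e(U,W)| ≤ λ √(|U||W|(1-|U|/n)(1-|W|/n))`. -/
theorem edge_distribution_abs {n : ℕ} (G : SimpleGraph (Fin n)) (d : ℕ) (lam : ℝ)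
    (h : IsNDLGraph G d lam) (U W : Finset (Fin n)) :
    |(d : ℝ) * U.card * W.card / n - edgeCountBetween G U W| ≤
      lam * Real.sqrt (U.card * W.card * (1 - U.card / n) * (1 - W.card / n)) := by
  obtain ⟨hreg, i₀, hi₀, hball⟩ := h
  by_cases hn2 : 2 ≤ n
  · -- main case
    have hn : 0 < n := by omega
    have hn' : (n:ℝ) ≠ 0 := Nat.cast_ne_zero.2 hn.ne'
    have hlam : 0 ≤ lam := by
      obtain ⟨j, hj⟩ := Fintype.exists_ne_of_one_lt_card (α := Fin n)
        (by rw [Fintype.card_fin]; omega) i₀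
      exact (abs_nonneg _).trans (hball j hj)
    set xv := vec (fun v => if v ∈ U then (1:ℝ) else 0) - ((U.card:ℝ)/n) • vec (fun _ => 1)
      with hxv
    set yv := vec (fun v => if v ∈ W then (1:ℝ) else 0) - ((W.card:ℝ)/n) • vec (fun _ => 1)
      with hyv
    have hx0 : ⟪vec (n := n) fun _ => 1, xv⟫ = 0 := by
      rw [hxv, inner_sub_right, real_inner_smul_right, inner_vec, inner_vec]
      simp only [one_mul, mul_one]
      rw [Finset.sum_boole]
      simp only [Finset.sum_const, Finset.card_univ, Fintype.card_fin, nsmul_eq_mul, mul_one]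
      have : (Finset.univ.filter (· ∈ U)) = U := by ext v; simp
      rw [this]
      field_simp
      simp
    have hb := spectral_bound G d lam ⟨hreg, i₀, hi₀, hball⟩ hn hlam xv yv hx0
    rw [hxv, hyv, main_identity G hreg U W hn] at hb
    have hUle : (U.card : ℝ) / n ≤ 1 := by
      rw [div_le_one (by positivity)]
      exact_mod_cast (by simpa using Finset.card_le_univ U : U.card ≤ n)
    have hWle : (W.card : ℝ) / n ≤ 1 := by
      rw [div_le_one (by positivity)]
      exact_mod_cast (by simpa using Finset.card_le_univ W : W.card ≤ n)
    calc |(d : ℝ) * U.card * W.card / n - edgeCountBetween G U W|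
        = |(edgeCountBetween G U W : ℝ) - d * U.card * W.card / n| := abs_sub_comm _ _
      _ ≤ lam * (‖xv‖ * ‖yv‖) := hb
      _ = lam * Real.sqrt (U.card * W.card * (1 - U.card/n) * (1 - W.card/n)) := by
          rw [← Real.sqrt_sq (norm_nonneg xv), ← Real.sqrt_sq (norm_nonneg yv), hxv, hyv,
            norm_sq_indicator U hn, norm_sq_indicator W hn,
            ← Real.sqrt_mul (mul_nonneg (Nat.cast_nonneg _) (by linarith))]
          congr 1
          ring
  · -- degenerate cases n = 0, 1
    interval_cases n
    · have hU : U = ∅ := Finset.eq_empty_of_isEmpty U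
      have hW : W = ∅ := Finset.eq_empty_of_isEmpty W
      subst hU; subst hW
      simp [edgeCountBetween]
    · -- n = 1
      classical
      have hadj : ∀ v w : Fin 1, ¬ G.Adj v w := fun v w hvw =>
        G.ne_of_adj hvw (Subsingleton.elim v w)
      have hd : d = 0 := by
        have h0 := hreg 0
        have hne : G.neighborFinset 0 = ∅ :=
          Finset.eq_empty_of_forall_notMem fun w hw =>
            hadj 0 w ((SimpleGraph.mem_neighborFinset _ _ _).1 hw)
        rw [← h0, SimpleGraph.degree, hne, Finset.card_empty]
      have he : edgeCountBetween G U W = 0 := by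
        unfold edgeCountBetween
        simp [hadj]
      have hU1 : U.card ≤ 1 := by simpa using Finset.card_le_univ U
      have hW1 : W.card ≤ 1 := by simpa using Finset.card_le_univ W
      rw [he, hd]
      have harg : (U.card:ℝ) * W.card * (1 - U.card/(1:ℕ)) * (1 - W.card/(1:ℕ)) = 0 := by
        rcases Nat.le_one_iff_eq_zero_or_eq_one.1 hU1 with h1 | h1 <;>
          rcases Nat.le_one_iff_eq_zero_or_eq_one.1 hW1 with h2 | h2 <;>
          rw [h1, h2] <;> norm_num
      rw [harg]
      simp


end ZeroForcing
end
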